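/- arXiv:1811.05626 — 6 statements merged into one kernel-verified Lean document; each statement's English description precedes it below -/
import Mathlib

section
/- Let d ≥ 1 and let χ be a d²×d² Hermitian positive semidefinite matrix with eigendecomposition χ = ∑_{j=1}^{d²} Λ_j u_j u_jᴴ, where Λ_j ≥ 0 and (u_j)_{j=1}^{d²} is an orthonormal basis of ℂ^{d²}. Define E_j := √(Λ_j) · ∑_{k=1}^{d²} (u_j)_k Ẽ_k, let √χ := ∑_j √(Λ_j) u_j u_jᴴ, for a d×d matrix ρ let ρ̃ denote the d²×d² matrix with entries ρ̃_{j,k} := tr(Ẽ_j ρ Ẽ_kᴴ), and let U := ∑_j ū_j e_jᴴ where ū_j is the entrywise complex conjugate of u_j and (e_j) is the standard basis of ℂ^{d²}. Then U is unitary, and for every d×d complex matrix ρ, U · ( ∑_{j,k} tr(E_j ρ E_kᴴ) e_j e_kᴴ ) · Uᴴ = (√χ)* ρ̃ (√χ)*, where (√χ)* denotes the entrywise complex conjugate of √χ. -/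
open Matrix BigOperators Finset
open scoped ComplexOrder

namespace Covert

noncomputable section

/-- Trace norm: sum of singular values of `X`, i.e. `tr √(Xᴴ X)`. -/
def traceNorm {n : Type*} [Fintype n] [DecidableEq n] (X : Matrix n n ℂ) : ℝ :=
  ∑ i, Real.sqrt ((Matrix.isHermitian_conjTranspose_mul_self X).eigenvalues i)

/-- Frobenius norm `√(tr (Xᴴ X))`. -/
def frobeniusNorm {n : Type*} [Fintype n] [DecidableEq n] (X : Matrix n n ℂ) : ℝ :=
  Real.sqrt ((Matrix.trace (Xᴴ * X)).re)

/-- smallest eigenvalue of a Hermitian matrix -/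
def eigMin {n : Type*} [Fintype n] [DecidableEq n] {A : Matrix n n ℂ}
    (hA : A.IsHermitian) : ℝ := ⨅ i, hA.eigenvalues i

/-- largest eigenvalue of a Hermitian matrix -/
def eigMax {n : Type*} [Fintype n] [DecidableEq n] {A : Matrix n n ℂ}
    (hA : A.IsHermitian) : ℝ := ⨆ i, hA.eigenvalues i

/-- largest singular value -/
def sigmaMax {n : Type*} [Fintype n] [DecidableEq n] (X : Matrix n n ℂ) : ℝ :=
  ⨆ i, Real.sqrt ((Matrix.isHermitian_conjTranspose_mul_self X).eigenvalues i)

/-- functional calculus `f(A)` for a Hermitian matrix `A`, extended by `0` junk value. -/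
def matFun {n : Type*} [Fintype n] [DecidableEq n] (f : ℝ → ℝ) (A : Matrix n n ℂ) :
    Matrix n n ℂ :=
  if hA : A.IsHermitian then hA.cfc f else 0

/-- matrix logarithm via functional calculus, with the convention `log 0 = 0`. -/
def matLog {n : Type*} [Fintype n] [DecidableEq n] (A : Matrix n n ℂ) : Matrix n n ℂ :=
  matFun Real.log A

/-- matrix real power via functional calculus (`0 ^ a = 0` for `a ≠ 0`). -/
def matPow {n : Type*} [Fintype n] [DecidableEq n] (A : Matrix n n ℂ) (a : ℝ) : Matrix n n ℂ :=
  matFun (fun x => x ^ a) A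

/-- von Neumann entropy `H(ρ) = -tr(ρ log ρ)`. -/
def vnEntropy {n : Type*} [Fintype n] [DecidableEq n] (ρ : Matrix n n ℂ) : ℝ :=
  -((ρ * matLog ρ).trace).re

/-- quantum relative entropy `D(ρ‖σ) = tr(ρ (log ρ - log σ))`. -/
def qRelEntropy {n : Type*} [Fintype n] [DecidableEq n] (ρ σ : Matrix n n ℂ) : ℝ :=
  ((ρ * (matLog ρ - matLog σ)).trace).re

/-- a density matrix: positive semidefinite with unit trace. -/
def IsDensity {n : Type*} [Fintype n] [DecidableEq n] (ρ : Matrix n n ℂ) : Prop :=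
  ρ.PosSemidef ∧ ρ.trace = 1

end

end Covert

open Covert

/-- The matrix units `|n⟩⟨m|` on `ℂ^d`, indexed by pairs `(n, m)`
(the pair `(n,m)` corresponds to the index `d(n-1)+m` of the paper). -/
noncomputable def Etilde {d : ℕ} (p : Fin d × Fin d) : Matrix (Fin d) (Fin d) ℂ :=
  Matrix.single p.1 p.2 1

/-- up to the explicit unitary `U = ∑_j ū_j e_jᴴ`, the complementary-channel
matrix `[tr(E_j ρ E_kᴴ)]_{j,k}` equals `(√χ)* ρ̃ (√χ)*`. -/
theorem stmt6 {d : ℕ} (hd : 1 ≤ d)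
    (Λ : Fin d × Fin d → ℝ) (hΛ : ∀ j, 0 ≤ Λ j)
    (u : Fin d × Fin d → (Fin d × Fin d → ℂ))
    (hortho : ∀ j k, star (u j) ⬝ᵥ u k = if j = k then 1 else 0)
    (χ : Matrix (Fin d × Fin d) (Fin d × Fin d) ℂ)
    (hχ : χ = ∑ j, (Λ j : ℂ) • Matrix.vecMulVec (u j) (star (u j)))
    (E : Fin d × Fin d → Matrix (Fin d) (Fin d) ℂ)
    (hE : ∀ j, E j = Real.sqrt (Λ j) • ∑ k, u j k • Etilde k)
    (sqrtχ : Matrix (Fin d × Fin d) (Fin d × Fin d) ℂ)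
    (hsqrtχ : sqrtχ = ∑ j, (Real.sqrt (Λ j) : ℂ) • Matrix.vecMulVec (u j) (star (u j)))
    (U : Matrix (Fin d × Fin d) (Fin d × Fin d) ℂ)
    (hU : U = Matrix.of fun a b => star (u b a))
    (ρ : Matrix (Fin d) (Fin d) ℂ)
    (ρt : Matrix (Fin d × Fin d) (Fin d × Fin d) ℂ)
    (hρt : ρt = Matrix.of fun j k => (Etilde j * ρ * (Etilde k)ᴴ).trace)
    (N : Matrix (Fin d × Fin d) (Fin d × Fin d) ℂ)
    (hN : N = Matrix.of fun j k => (E j * ρ * (E k)ᴴ).trace) :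
    U ∈ Matrix.unitaryGroup (Fin d × Fin d) ℂ ∧
    U * N * Uᴴ =
      sqrtχ.map (starRingEnd ℂ) * ρt * sqrtχ.map (starRingEnd ℂ) := by
  classical
  set W : Matrix (Fin d × Fin d) (Fin d × Fin d) ℂ := Matrix.of fun j p => u j p with hW
  set D : Matrix (Fin d × Fin d) (Fin d × Fin d) ℂ :=
    Matrix.diagonal (fun j => (Real.sqrt (Λ j) : ℂ)) with hD
  have hWW : W * Wᴴ = 1 := by
    ext j k
    have h := hortho k j
    simp only [dotProduct, Pi.star_apply] at h
    simp only [Matrix.mul_apply, Matrix.conjTranspose_apply, hW, Matrix.of_apply,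
      Matrix.one_apply]
    rw [Finset.sum_congr rfl (fun x _ => mul_comm (u j x) (star (u k x))), h]
    simp [eq_comm]
  have hUW : U = Wᴴ := by
    ext a b
    simp [hU, hW, Matrix.conjTranspose_apply]
  have hDH : Dᴴ = D := by
    ext j k
    by_cases h : j = k <;>
      simp [hD, Matrix.conjTranspose_apply, Matrix.diagonal_apply, h,
        Complex.star_def, Complex.conj_ofReal]
    exact fun hkj => absurd hkj.symm h
  have hsq : sqrtχ.map (starRingEnd ℂ) = Wᴴ * D * W := by
    ext a b
    simp only [hsqrtχ, Matrix.map_apply, Matrix.sum_apply, Matrix.smul_apply,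
      Matrix.vecMulVec_apply, Pi.star_apply, smul_eq_mul, map_sum, _root_.map_mul,
      Complex.conj_ofReal, starRingEnd_apply, star_star]
    simp only [Matrix.mul_apply, Matrix.conjTranspose_apply, hW, hD, Matrix.of_apply,
      Matrix.diagonal_apply, mul_ite, ite_mul, mul_zero, zero_mul,
      Finset.sum_ite_eq, Finset.sum_ite_eq', Finset.mem_univ, if_true]
    refine Finset.sum_congr rfl fun x _ => ?_
    simp only [Complex.star_def, Complex.conj_ofReal]
    ring
  have hNeq : N = (D * W) * ρt * (D * W)ᴴ := by
    ext j k
    have hEρE : (E j * ρ * (E k)ᴴ).trace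
        = (Real.sqrt (Λ j) : ℂ) * (Real.sqrt (Λ k) : ℂ) *
          ∑ p, ∑ q, u j p * star (u k q) * (Etilde p * ρ * (Etilde q)ᴴ).trace := by
      rw [hE j, hE k]
      simp only [Matrix.conjTranspose_smul, Matrix.conjTranspose_sum, star_trivial,
        Matrix.smul_mul, Matrix.mul_smul, Matrix.trace_smul,
        Matrix.sum_mul, Matrix.mul_sum, Matrix.trace_sum]
      simp only [smul_eq_mul, Complex.real_smul, Finset.smul_sum, Finset.mul_sum,
        Complex.star_def, Complex.conj_ofReal]
      rw [Finset.sum_comm]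
      refine Finset.sum_congr rfl fun p _ => Finset.sum_congr rfl fun q _ => ?_
      ring
    simp only [hN, Matrix.of_apply, hEρE]
    simp only [Matrix.mul_apply, Matrix.conjTranspose_apply, hW, hD, Matrix.of_apply,
      Matrix.diagonal_apply, hρt, ite_mul, zero_mul, mul_ite, mul_zero,
      Finset.sum_ite_eq, Finset.sum_ite_eq', Finset.mem_univ, if_true,
      star_mul', Complex.conj_ofReal, Finset.mul_sum, Finset.sum_mul]
    simp only [Complex.star_def, Complex.conj_ofReal]
    rw [Finset.sum_comm]
    refine Finset.sum_congr rfl fun p _ => Finset.sum_congr rfl fun q _ => ?_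
    ring
  have hUnit : U ∈ Matrix.unitaryGroup (Fin d × Fin d) ℂ := by
    rw [Matrix.mem_unitaryGroup_iff]
    have hs : star U = W := by
      rw [hUW, Matrix.star_eq_conjTranspose, Matrix.conjTranspose_conjTranspose]
    rw [hs, hUW]
    exact mul_eq_one_comm.mp hWW
  refine ⟨hUnit, ?_⟩
  rw [hNeq, hUW, hsq, Matrix.conjTranspose_conjTranspose, Matrix.conjTranspose_mul, hDH]
  noncomm_ring
end

section
/- Let ρ0 be a positive definite density matrix on ℂ^d, ρ̄ a density matrix on ℂ^d, q ≥ 1, and for j ∈ {1,…,q} let ρ(j) := ρ0^{⊗(j−1)} ⊗ ρ̄ ⊗ ρ0^{⊗(q−j)}. Then tr( ( (1/q)·∑_{j=1}^q ρ(j) )² · (ρ0^{⊗q})⁻¹ ) − 1 = (1/q)·( tr(ρ̄²·ρ0⁻¹) − 1 ). -/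
open Matrix BigOperators Finset
open scoped ComplexOrder

open Covert

/-- Kronecker/tensor product of a family of `d × d` matrices, indexed by tuples. -/
noncomputable def tensorFam {q d : ℕ} (A : Fin q → Matrix (Fin d) (Fin d) ℂ) :
    Matrix (Fin q → Fin d) (Fin q → Fin d) ℂ :=
  Matrix.of fun i j => ∏ t, A t (i t) (j t)


theorem tensorFam_mul {q d : ℕ} (A B : Fin q → Matrix (Fin d) (Fin d) ℂ) :
    tensorFam A * tensorFam B = tensorFam fun t => A t * B t := by
  ext i j
  simp only [tensorFam, Matrix.mul_apply, Matrix.of_apply]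
  rw [Finset.prod_univ_sum]
  simp [Finset.prod_mul_distrib]

theorem tensorFam_one {q d : ℕ} :
    (tensorFam fun _ : Fin q => (1 : Matrix (Fin d) (Fin d) ℂ)) = 1 := by
  ext i j
  simp only [tensorFam, Matrix.of_apply, Matrix.one_apply]
  rw [Fintype.prod_boole]
  simp [funext_iff]

theorem tensorFam_trace {q d : ℕ} (A : Fin q → Matrix (Fin d) (Fin d) ℂ) :
    (tensorFam A).trace = ∏ t, (A t).trace := by
  simp only [Matrix.trace, Matrix.diag, tensorFam, Matrix.of_apply]
  rw [Finset.prod_univ_sum]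
  simp

/-- the `χ²`-type identity for the uniform mixture of the PPM states `ρ(j)`. -/
theorem stmt10 {d q : ℕ} (hq : 1 ≤ q) (ρ0 ρbar : Matrix (Fin d) (Fin d) ℂ)
    (hρ0 : IsDensity ρ0) (hρ0pd : ρ0.PosDef) (hρbar : IsDensity ρbar) :
    ((((q : ℂ))⁻¹ • ∑ j : Fin q, tensorFam fun t => if t = j then ρbar else ρ0) *
      (((q : ℂ))⁻¹ • ∑ j : Fin q, tensorFam fun t => if t = j then ρbar else ρ0) *
      (tensorFam fun _ => ρ0)⁻¹).trace - 1 =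
    ((q : ℂ))⁻¹ * ((ρbar * ρbar * ρ0⁻¹).trace - 1) := by
  have hdet : IsUnit ρ0.det := (Matrix.isUnit_iff_isUnit_det ρ0).mp hρ0pd.isUnit
  have hinv : ρ0 * ρ0⁻¹ = 1 := Matrix.mul_nonsing_inv ρ0 hdet
  have hinv' : ρ0⁻¹ * ρ0 = 1 := Matrix.nonsing_inv_mul ρ0 hdet
  have hTinv : (tensorFam fun _ : Fin q => ρ0)⁻¹ = tensorFam fun _ : Fin q => ρ0⁻¹ := by
    apply Matrix.inv_eq_right_inv
    rw [tensorFam_mul]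
    simp only [hinv]
    exact tensorFam_one
  set f : Fin q → Matrix (Fin q → Fin d) (Fin q → Fin d) ℂ :=
    fun j => tensorFam fun t => if t = j then ρbar else ρ0 with hf
  set c : ℂ := (ρbar * ρbar * ρ0⁻¹).trace with hc
  have key : ∀ j k : Fin q, (f j * f k * (tensorFam fun _ : Fin q => ρ0)⁻¹).trace
      = if j = k then c else 1 := by
    intro j k
    rw [hTinv, hf]
    simp only [tensorFam_mul]
    rw [tensorFam_trace]
    by_cases hjk : j = k
    · subst hjk
      rw [if_pos rfl]
      rw [Finset.prod_eq_single j]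
      · simp [hc]
      · intro t _ ht
        rw [if_neg ht, Matrix.mul_assoc, hinv, Matrix.mul_one, hρ0.2]
      · simp
    · rw [if_neg hjk]
      apply Finset.prod_eq_one
      intro t _
      by_cases htj : t = j
      · subst htj
        rw [if_pos rfl, if_neg hjk, Matrix.mul_assoc, hinv, Matrix.mul_one, hρbar.2]
      · rw [if_neg htj]
        by_cases htk : t = k
        · subst htk
          rw [if_pos rfl, Matrix.trace_mul_cycle, hinv', Matrix.one_mul, hρbar.2]
        · rw [if_neg htk, Matrix.mul_assoc, hinv, Matrix.mul_one, hρ0.2]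
  have hq0 : (q : ℂ) ≠ 0 := Nat.cast_ne_zero.mpr (by omega)
  have hSS : (∑ j : Fin q, f j) * (∑ j : Fin q, f j) * (tensorFam fun _ : Fin q => ρ0)⁻¹
      = ∑ j : Fin q, ∑ k : Fin q, f j * f k * (tensorFam fun _ : Fin q => ρ0)⁻¹ := by
    rw [Finset.sum_mul_sum, Finset.sum_mul]
    exact Finset.sum_congr rfl fun j _ => Finset.sum_mul _ _ _
  have expand : (((q : ℂ)⁻¹ • ∑ j : Fin q, f j) * ((q : ℂ)⁻¹ • ∑ j : Fin q, f j) *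
      (tensorFam fun _ : Fin q => ρ0)⁻¹).trace
      = (q : ℂ)⁻¹ * (q : ℂ)⁻¹ * ∑ j : Fin q, ∑ k : Fin q,
        (f j * f k * (tensorFam fun _ : Fin q => ρ0)⁻¹).trace := by
    rw [Matrix.smul_mul, Matrix.mul_smul, Matrix.smul_mul, Matrix.smul_mul, hSS,
      Matrix.trace_smul, Matrix.trace_smul, smul_smul]
    simp [Matrix.trace_sum, smul_eq_mul, mul_assoc]
  rw [hf] at expand
  rw [expand]
  have sum_eval : ∑ j : Fin q, ∑ k : Fin q,
      (f j * f k * (tensorFam fun _ : Fin q => ρ0)⁻¹).trace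
      = (q : ℂ) * (q : ℂ) + (q : ℂ) * (c - 1) := by
    simp only [key]
    have h1 : ∀ j : Fin q, (∑ k : Fin q, if j = k then c else 1) = (q : ℂ) + (c - 1) := by
      intro j
      have h2 : ∀ k : Fin q, (if j = k then c else 1) = 1 + if j = k then c - 1 else 0 := by
        intro k; by_cases h : j = k <;> simp [h]
      simp only [h2, Finset.sum_add_distrib, Finset.sum_ite_eq, Finset.mem_univ, if_pos,
        Finset.sum_const, Finset.card_univ, Fintype.card_fin, nsmul_eq_mul, mul_one]
    simp only [h1, Finset.sum_const, Finset.card_univ, Fintype.card_fin, nsmul_eq_mul]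
    ring
  rw [sum_eval]
  field_simp
  ring
end

section
/- Let ρ be a density matrix on ℂ^d and let χ and χ̂ be arbitrary d²×d² complex matrices. Then ‖ ∑_{j,k=1}^{d²} (χ_{j,k} − χ̂_{j,k}) · Ẽ_j ρ Ẽ_kᴴ ‖₁ ≤ ∑_{j,k=1}^{d²} |χ_{j,k} − χ̂_{j,k}|. -/
open Matrix BigOperators Finset
open scoped ComplexOrder

open Covert

lemma mul_star_re (z : ℂ) (r : ℝ) : z * ↑r * star z = ((r * Complex.normSq z : ℝ) : ℂ) := by
  calc z * ↑r * star z = ↑r * (z * (starRingEnd ℂ) z) := by rw [Complex.star_def]; ring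
  _ = ↑r * ↑(Complex.normSq z) := by rw [Complex.mul_conj]
  _ = _ := by push_cast; ring

lemma star_mul_self_re (z : ℂ) : (star z * z).re = Complex.normSq z := by
  rw [Complex.star_def, mul_comm, Complex.mul_conj]; simp

set_option maxHeartbeats 1000000

lemma exists_dual {d : ℕ} (M : Matrix (Fin d) (Fin d) ℂ) :
    ∃ U : Matrix (Fin d) (Fin d) ℂ,
      (∀ a b, ‖U a b‖ ≤ 1) ∧ (Uᴴ * M).trace = (traceNorm M : ℂ) := by
  classical
  set hM := Matrix.isHermitian_conjTranspose_mul_self M with hhM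
  set W : Matrix (Fin d) (Fin d) ℂ := (hM.eigenvectorUnitary : Matrix (Fin d) (Fin d) ℂ) with hW
  have hW1 : Wᴴ * W = 1 := by
    simpa [star_eq_conjTranspose] using
      Matrix.mem_unitaryGroup_iff'.mp (hM.eigenvectorUnitary).2
  have hW2 : W * Wᴴ = 1 := by
    simpa [star_eq_conjTranspose] using
      Matrix.mem_unitaryGroup_iff.mp (hM.eigenvectorUnitary).2
  set lam : Fin d → ℝ := hM.eigenvalues with hlam
  have hlam0 : ∀ i, 0 ≤ lam i := fun i =>
    (Matrix.posSemidef_conjTranspose_mul_self M).eigenvalues_nonneg i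
  set D : Matrix (Fin d) (Fin d) ℂ := Matrix.diagonal (RCLike.ofReal ∘ lam) with hD
  have hMM : Mᴴ * M = W * D * Wᴴ := by
    exact hM.spectral_theorem
  set g : Fin d → ℝ := fun i => if lam i = 0 then 0 else (Real.sqrt (lam i))⁻¹ with hg
  set D' : Matrix (Fin d) (Fin d) ℂ := Matrix.diagonal (fun i => (g i : ℂ)) with hD'
  set U : Matrix (Fin d) (Fin d) ℂ := M * W * D' * Wᴴ with hU
  have hD'H : D'ᴴ = D' := by
    have h0 : (star fun i => ((g i : ℝ) : ℂ)) = fun i => ((g i : ℝ) : ℂ) :=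
      funext fun i => by simp [Pi.star_apply, Complex.star_def, Complex.conj_ofReal]
    rw [hD', Matrix.diagonal_conjTranspose, h0]
  have hUH : Uᴴ = W * D' * Wᴴ * Mᴴ := by
    simp only [hU, Matrix.conjTranspose_mul, Matrix.conjTranspose_conjTranspose, hD'H,
      Matrix.mul_assoc]
  have hginv : ∀ i, (g i : ℂ) * ((lam i : ℝ) : ℂ) = ((Real.sqrt (lam i) : ℝ) : ℂ) := by
    intro i
    by_cases h : lam i = 0
    · simp [hg, h]
    · have key : (Real.sqrt (lam i))⁻¹ * lam i = Real.sqrt (lam i) := by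
        rw [inv_mul_eq_div, Real.div_sqrt]
      simp only [hg, if_neg h]
      exact_mod_cast congrArg Complex.ofReal key
  have hDD' : D' * D = Matrix.diagonal (fun i => ((Real.sqrt (lam i) : ℝ) : ℂ)) := by
    rw [hD', hD, Matrix.diagonal_mul_diagonal]
    exact congrArg Matrix.diagonal (funext fun i => hginv i)
  have hWW : ∀ X : Matrix (Fin d) (Fin d) ℂ, Wᴴ * (W * X) = X := fun X => by
    rw [← Matrix.mul_assoc, hW1, Matrix.one_mul]
  refine ⟨U, ?_, ?_⟩
  · -- entry bounds
    set e : Fin d → ℝ := fun i => if lam i = 0 then 0 else 1 with he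
    have hD'DD' : D' * (D * D') = Matrix.diagonal (fun i => ((e i : ℝ) : ℂ)) := by
      rw [hD', hD, Matrix.diagonal_mul_diagonal, Matrix.diagonal_mul_diagonal]
      refine congrArg Matrix.diagonal (funext fun i => ?_)
      by_cases h : lam i = 0
      · simp [hg, he, h]
      · have hpos : 0 < lam i := lt_of_le_of_ne (hlam0 i) (Ne.symm h)
        have hs : Real.sqrt (lam i) ≠ 0 := ne_of_gt (Real.sqrt_pos.mpr hpos)
        have key : (Real.sqrt (lam i))⁻¹ * (lam i * (Real.sqrt (lam i))⁻¹) = 1 := by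
          rw [← mul_assoc, inv_mul_eq_div, Real.div_sqrt, mul_inv_cancel₀ hs]
        simp only [hg, he, if_neg h]
        have hco : (RCLike.ofReal ∘ lam) i = ((lam i : ℝ) : ℂ) := rfl
        rw [hco]
        exact_mod_cast congrArg Complex.ofReal key
    have hMM' : ∀ X : Matrix (Fin d) (Fin d) ℂ, Mᴴ * (M * X) = W * (D * (Wᴴ * X)) := by
      intro X; rw [← Matrix.mul_assoc, hMM]; simp only [Matrix.mul_assoc]
    have hUU : Uᴴ * U = W * (Matrix.diagonal (fun i => ((e i : ℝ) : ℂ)) * Wᴴ) := by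
      rw [hUH, hU]
      simp only [Matrix.mul_assoc]
      rw [hMM', hWW, hWW, ← Matrix.mul_assoc D D', ← Matrix.mul_assoc D' (D * D'), hD'DD']
    have hdiagbound : ∀ b, ((Uᴴ * U) b b).re ≤ 1 := by
      intro b
      rw [hUU]
      have hL : (W * (Matrix.diagonal (fun i => ((e i : ℝ) : ℂ)) * Wᴴ)) b b
          = ∑ i, ((e i * Complex.normSq (W b i) : ℝ) : ℂ) := by
        rw [← Matrix.mul_assoc, Matrix.mul_apply]
        refine Finset.sum_congr rfl fun i _ => ?_
        rw [Matrix.mul_diagonal, Matrix.conjTranspose_apply]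
        exact mul_star_re (W b i) (e i)
      rw [hL]
      have hre : (∑ i, ((e i * Complex.normSq (W b i) : ℝ) : ℂ)).re
          = ∑ i, e i * Complex.normSq (W b i) := by
        rw [Complex.re_sum]
        exact Finset.sum_congr rfl fun i _ => by simp
      rw [hre]
      have h1 : ∑ i, e i * Complex.normSq (W b i) ≤ ∑ i, Complex.normSq (W b i) := by
        refine Finset.sum_le_sum fun i _ => ?_
        have : e i ≤ 1 := by by_cases h : lam i = 0 <;> simp [he, h]
        nlinarith [Complex.normSq_nonneg (W b i)]
      have h2 : ∑ i, Complex.normSq (W b i) = 1 := by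
        have h3 := congrArg (fun A : Matrix (Fin d) (Fin d) ℂ => (A b b).re) hW2
        simp only [Matrix.mul_apply, Matrix.conjTranspose_apply, Matrix.one_apply_eq,
          Complex.re_sum, Complex.one_re] at h3
        rw [← h3]
        refine Finset.sum_congr rfl fun i _ => ?_
        rw [← star_mul_self_re (W b i)]
        ring_nf
      linarith
    intro a b
    have h3 : Complex.normSq (U a b) ≤ ((Uᴴ * U) b b).re := by
      have h4 : ((Uᴴ * U) b b).re = ∑ x, Complex.normSq (U x b) := by
        simp only [Matrix.mul_apply, Matrix.conjTranspose_apply, Complex.re_sum]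
        exact Finset.sum_congr rfl fun x _ => star_mul_self_re (U x b)
      rw [h4]
      exact Finset.single_le_sum (f := fun x => Complex.normSq (U x b))
        (fun x _ => Complex.normSq_nonneg _) (Finset.mem_univ a)
    have h5 : (‖U a b‖)^2 ≤ 1 := by
      rw [Complex.sq_norm]; exact le_trans h3 (hdiagbound b)
    nlinarith [norm_nonneg (U a b)]
  · -- trace equality
    have hUM : Uᴴ * M = W * ((D' * D) * Wᴴ) := by
      rw [hUH, Matrix.mul_assoc (W * D' * Wᴴ) Mᴴ M, hMM]
      simp only [Matrix.mul_assoc]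
      rw [hWW, ← Matrix.mul_assoc D' D Wᴴ]
    rw [hUM, Matrix.trace_mul_comm W, Matrix.mul_assoc (D' * D) Wᴴ W, hW1, Matrix.mul_one,
      hDD', Matrix.trace_diagonal]
    show _ = ((∑ i, Real.sqrt (lam i) : ℝ) : ℂ)
    push_cast
    rfl


lemma density_entry_abs_le_one {d : ℕ} {ρ : Matrix (Fin d) (Fin d) ℂ}
    (h1 : ρ.PosSemidef) (h2 : ρ.trace = 1) (m m' : Fin d) : ‖ρ m m'‖ ≤ 1 := by
  classical
  obtain ⟨B, hB⟩ := (by open scoped MatrixOrder in exact CStarAlgebra.nonneg_iff_eq_star_mul_self.mp h1.nonneg :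
    ∃ B : Matrix (Fin d) (Fin d) ℂ, ρ = Bᴴ * B)
  have happ : ∀ a b, ρ a b = ∑ x, star (B x a) * B x b := by
    intro a b; rw [hB]; simp [Matrix.mul_apply, Matrix.conjTranspose_apply]
  have hdiag : ∀ a, (ρ a a).re = ∑ x, Complex.normSq (B x a) := by
    intro a
    rw [happ, Complex.re_sum]
    exact Finset.sum_congr rfl fun x _ => by
      rw [Complex.star_def, mul_comm, Complex.mul_conj]; simp
  have htr : ∑ a, (ρ a a).re = 1 := by
    have := congrArg Complex.re h2
    rw [Matrix.trace] at this
    simpa [Complex.re_sum, Matrix.diag] using this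
  have hdle : ∀ a, (ρ a a).re ≤ 1 := by
    intro a
    have hnn : ∀ b ∈ Finset.univ, 0 ≤ ((ρ b b).re) := fun b _ => by
      rw [hdiag]; exact Finset.sum_nonneg fun x _ => Complex.normSq_nonneg _
    calc (ρ a a).re ≤ ∑ b, (ρ b b).re := Finset.single_le_sum hnn (Finset.mem_univ a)
    _ = 1 := htr
  -- Cauchy-Schwarz
  have habs : ‖ρ m m'‖ ≤ ∑ x, ‖B x m‖ * ‖B x m'‖ := by
    rw [happ]
    refine le_trans (norm_sum_le _ _) (Finset.sum_le_sum fun x _ => ?_)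
    rw [norm_mul]
    simp [Complex.star_def]
  have hcs : (∑ x, ‖B x m‖ * ‖B x m'‖)^2 ≤
      (∑ x, (‖B x m‖)^2) * (∑ x, (‖B x m'‖)^2) :=
    Finset.sum_mul_sq_le_sq_mul_sq _ _ _
  have hm : ∑ x, (‖B x m‖)^2 ≤ 1 := by
    have : ∑ x, (‖B x m‖)^2 = (ρ m m).re := by
      rw [hdiag]; exact Finset.sum_congr rfl fun x _ => Complex.sq_norm _
    rw [this]; exact hdle m
  have hm' : ∑ x, (‖B x m'‖)^2 ≤ 1 := by
    have : ∑ x, (‖B x m'‖)^2 = (ρ m' m').re := by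
      rw [hdiag]; exact Finset.sum_congr rfl fun x _ => Complex.sq_norm _
    rw [this]; exact hdle m'
  have hnn : 0 ≤ ∑ x, ‖B x m‖ * ‖B x m'‖ :=
    Finset.sum_nonneg fun x _ => mul_nonneg (norm_nonneg _) (norm_nonneg _)
  have hsq : ∀ x, (0:ℝ) ≤ (‖B x m‖)^2 := fun x => sq_nonneg _
  nlinarith [Finset.sum_nonneg (fun x (_ : x ∈ Finset.univ) => sq_nonneg (‖B x m‖))]

lemma stdBasis_conjT {d : ℕ} (i j : Fin d) :
    (Matrix.single i j (1:ℂ))ᴴ = Matrix.single j i 1 := by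
  ext a b
  simp only [Matrix.conjTranspose_apply, Matrix.single, Matrix.of_apply]
  by_cases h1 : i = b <;> by_cases h2 : j = a <;> simp [h1, h2]

lemma trace_mul_stdBasis {d : ℕ} (A : Matrix (Fin d) (Fin d) ℂ) (n n' : Fin d) :
    (A * Matrix.single n n' (1:ℂ)).trace = A n' n := by
  classical
  rw [Matrix.trace]
  rw [Finset.sum_eq_single n' (fun b _ hb => by
    simp [Matrix.diag, Matrix.mul_single_apply_of_ne _ _ _ _ _ hb])
    (fun h => absurd (Finset.mem_univ n') h)]
  simp [Matrix.diag]

lemma Etilde_mul {d : ℕ} (ρ : Matrix (Fin d) (Fin d) ℂ) (j k : Fin d × Fin d) :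
    Matrix.single j.1 j.2 (1:ℂ) * ρ * (Matrix.single k.1 k.2 (1:ℂ))ᴴ
      = ρ j.2 k.2 • Matrix.single j.1 k.1 1 := by
  rw [stdBasis_conjT]
  ext a b
  rcases eq_or_ne b k.1 with hb | hb
  · subst hb
    rcases eq_or_ne a j.1 with ha | ha
    · subst ha; simp
    · simp [Matrix.single_mul_apply_of_ne _ _ _ _ _ ha,
        Matrix.single_apply_of_row_ne (Ne.symm ha)]
  · simp [Matrix.mul_single_apply_of_ne _ _ _ _ _ hb,
      Matrix.single_apply_of_col_ne _ _ (Ne.symm hb)]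

/-- the trace norm of `∑_{j,k} (χ_{jk} − χ̂_{jk}) Ẽ_j ρ Ẽ_kᴴ` is at most
the entrywise `ℓ¹` distance between `χ` and `χ̂`. -/
theorem stmt12 {d : ℕ} (ρ : Matrix (Fin d) (Fin d) ℂ) (hρ : IsDensity ρ)
    (χ χhat : Matrix (Fin d × Fin d) (Fin d × Fin d) ℂ) :
    traceNorm (∑ j, ∑ k, (χ j k - χhat j k) • (Etilde j * ρ * (Etilde k)ᴴ)) ≤
      ∑ j, ∑ k, ‖χ j k - χhat j k‖ := by
  classical
  set M := ∑ j, ∑ k, (χ j k - χhat j k) • (Etilde j * ρ * (Etilde k)ᴴ) with hMdef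
  obtain ⟨U, hUb, hUtr⟩ := exists_dual M
  have h0 : traceNorm M = ((Uᴴ * M).trace).re := by rw [hUtr]; simp
  have hexp : (Uᴴ * M).trace =
      ∑ j, ∑ k, (χ j k - χhat j k) * (ρ j.2 k.2 * star (U j.1 k.1)) := by
    rw [hMdef, Matrix.mul_sum, Matrix.trace_sum]
    refine Finset.sum_congr rfl fun j _ => ?_
    rw [Matrix.mul_sum, Matrix.trace_sum]
    refine Finset.sum_congr rfl fun k _ => ?_
    have hE : Etilde j * ρ * (Etilde k)ᴴ = ρ j.2 k.2 • Matrix.single j.1 k.1 1 :=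
      Etilde_mul ρ j k
    rw [hE, Matrix.mul_smul, Matrix.mul_smul, Matrix.trace_smul, Matrix.trace_smul,
      trace_mul_stdBasis, Matrix.conjTranspose_apply]
    simp [mul_comm, mul_assoc, mul_left_comm]
  calc traceNorm M = ((Uᴴ * M).trace).re := h0
    _ = (∑ j, ∑ k, (χ j k - χhat j k) * (ρ j.2 k.2 * star (U j.1 k.1))).re := by rw [hexp]
    _ ≤ ‖∑ j, ∑ k, (χ j k - χhat j k) * (ρ j.2 k.2 * star (U j.1 k.1))‖ :=
        Complex.re_le_norm _
    _ ≤ ∑ j, ∑ k, ‖(χ j k - χhat j k) * (ρ j.2 k.2 * star (U j.1 k.1))‖ :=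
        le_trans (norm_sum_le _ _) (Finset.sum_le_sum fun j _ => norm_sum_le _ _)
    _ ≤ ∑ j, ∑ k, ‖χ j k - χhat j k‖ := by
        refine Finset.sum_le_sum fun j _ => Finset.sum_le_sum fun k _ => ?_
        rw [norm_mul, norm_mul]
        have h1 := density_entry_abs_le_one hρ.1 hρ.2 j.2 k.2
        have h2 : ‖star (U j.1 k.1)‖ ≤ 1 := by
          rw [Complex.star_def, Complex.norm_conj]
          exact hUb j.1 k.1
        have h3 : ‖ρ j.2 k.2‖ * ‖star (U j.1 k.1)‖ ≤ 1 :=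
          mul_le_one₀ h1 (norm_nonneg _) h2
        calc ‖χ j k - χhat j k‖ *
              (‖ρ j.2 k.2‖ * ‖star (U j.1 k.1)‖)
            ≤ ‖χ j k - χhat j k‖ * 1 :=
              mul_le_mul_of_nonneg_left h3 (norm_nonneg _)
          _ = ‖χ j k - χhat j k‖ := mul_one _
end

section
/- Let A and B be n×n Hermitian positive semidefinite complex matrices with ‖A − B‖₁ < λ_min(A). Then ‖√A − √B‖₁ ≤ n² · ‖A − B‖₁ / ( 2·√( λ_min(A) − ‖A − B‖₁ ) ), where √ denotes the positive semidefinite matrix square root. -/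
open Matrix BigOperators Finset
open scoped ComplexOrder

open Covert

/-- The positive semidefinite square root (the definition removed from Mathlib, restored). -/
noncomputable def Matrix.PosSemidef.sqrt {n : Type*} [Fintype n] [DecidableEq n] {𝕜 : Type*}
    [RCLike 𝕜] {A : Matrix n n 𝕜} (hA : A.PosSemidef) : Matrix n n 𝕜 :=
  hA.1.eigenvectorUnitary.1 * diagonal ((↑) ∘ (√·) ∘ hA.1.eigenvalues) *
    (star hA.1.eigenvectorUnitary : Matrix n n 𝕜)

section Stmt13Helpers

variable {n : Type*} [Fintype n] [DecidableEq n]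

lemma traceNorm_def' (X : Matrix n n ℂ) : traceNorm X =
    ∑ i, Real.sqrt ((Matrix.isHermitian_conjTranspose_mul_self X).eigenvalues i) := rfl

lemma trace_eq_sum_eig' {H : Matrix n n ℂ} (hH : H.IsHermitian) :
    H.trace = ∑ i, (hH.eigenvalues i : ℂ) := by
  conv_lhs => rw [hH.spectral_theorem]
  rw [Unitary.conjStarAlgAut_apply, Matrix.trace_mul_cycle,
    (Matrix.mem_unitaryGroup_iff').mp (Matrix.IsHermitian.eigenvectorUnitary hH).2, one_mul,
    Matrix.trace_diagonal]
  rfl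

lemma traceNorm_nonneg' (X : Matrix n n ℂ) : 0 ≤ traceNorm X :=
  Finset.sum_nonneg fun i _ => Real.sqrt_nonneg _

lemma frob_sq_eq (X : Matrix n n ℂ) :
    ((Xᴴ * X).trace).re = ∑ i, (Matrix.isHermitian_conjTranspose_mul_self X).eigenvalues i := by
  rw [trace_eq_sum_eig' (Matrix.isHermitian_conjTranspose_mul_self X)]
  simp [Complex.re_sum]

lemma frob_sq_nonneg (X : Matrix n n ℂ) : 0 ≤ ((Xᴴ * X).trace).re := by
  rw [frob_sq_eq]
  exact Finset.sum_nonneg fun i _ =>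
    (Matrix.posSemidef_conjTranspose_mul_self X).eigenvalues_nonneg i

lemma frob_le_traceNorm (X : Matrix n n ℂ) :
    Real.sqrt (((Xᴴ * X).trace).re) ≤ traceNorm X := by
  rw [frob_sq_eq, traceNorm_def']
  have h1 : ∑ i, (Matrix.isHermitian_conjTranspose_mul_self X).eigenvalues i ≤
      (∑ i, Real.sqrt ((Matrix.isHermitian_conjTranspose_mul_self X).eigenvalues i)) ^ 2 := by
    have := Finset.sum_sq_le_sq_sum_of_nonneg
      (f := fun i => Real.sqrt ((Matrix.isHermitian_conjTranspose_mul_self X).eigenvalues i))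
      (s := Finset.univ) (fun i _ => Real.sqrt_nonneg _)
    calc ∑ i, (Matrix.isHermitian_conjTranspose_mul_self X).eigenvalues i
        = ∑ i, (Real.sqrt ((Matrix.isHermitian_conjTranspose_mul_self X).eigenvalues i)) ^ 2 := by
          refine Finset.sum_congr rfl fun i _ => ?_
          rw [Real.sq_sqrt ((Matrix.posSemidef_conjTranspose_mul_self X).eigenvalues_nonneg i)]
      _ ≤ _ := this
  calc Real.sqrt (∑ i, (Matrix.isHermitian_conjTranspose_mul_self X).eigenvalues i)
      ≤ Real.sqrt ((∑ i, Real.sqrt ((Matrix.isHermitian_conjTranspose_mul_self X).eigenvalues i)) ^ 2) :=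
        Real.sqrt_le_sqrt h1
    _ = _ := Real.sqrt_sq (Finset.sum_nonneg fun i _ => Real.sqrt_nonneg _)

lemma traceNorm_le_frob (X : Matrix n n ℂ) :
    traceNorm X ≤ Real.sqrt (Fintype.card n) * Real.sqrt (((Xᴴ * X).trace).re) := by
  have h1 : (traceNorm X) ^ 2 ≤ (Fintype.card n : ℝ) * ((Xᴴ * X).trace).re := by
    rw [frob_sq_eq, traceNorm_def']
    have := sq_sum_le_card_mul_sum_sq
      (f := fun i => Real.sqrt ((Matrix.isHermitian_conjTranspose_mul_self X).eigenvalues i))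
      (s := Finset.univ)
    simp only [Finset.card_univ] at this
    refine this.trans (le_of_eq ?_)
    congr 1
    refine Finset.sum_congr rfl fun i _ => ?_
    rw [Real.sq_sqrt ((Matrix.posSemidef_conjTranspose_mul_self X).eigenvalues_nonneg i)]
  calc traceNorm X = Real.sqrt ((traceNorm X) ^ 2) := (Real.sqrt_sq (traceNorm_nonneg' X)).symm
    _ ≤ Real.sqrt ((Fintype.card n : ℝ) * ((Xᴴ * X).trace).re) := Real.sqrt_le_sqrt h1
    _ = Real.sqrt (Fintype.card n) * Real.sqrt (((Xᴴ * X).trace).re) :=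
        Real.sqrt_mul (by positivity) _

lemma eig_abs_le_traceNorm {H : Matrix n n ℂ} (hH : H.IsHermitian) (i : n) :
    |hH.eigenvalues i| ≤ traceNorm H := by
  have htr : ((Hᴴ * H).trace).re = ∑ j, (hH.eigenvalues j) ^ 2 := by
    have h2 : (H * H).trace = ∑ j, (hH.eigenvalues j : ℂ) ^ 2 := by
      have h : H * H = (hH.eigenvectorUnitary : Matrix n n ℂ) *
          Matrix.diagonal (fun i => (hH.eigenvalues i : ℂ) ^ 2) *
          (star hH.eigenvectorUnitary : Matrix n n ℂ) := by
        conv_lhs => rw [hH.spectral_theorem, Unitary.conjStarAlgAut_apply]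
        rw [show ∀ U D sU : Matrix n n ℂ,
            (U * D * sU) * (U * D * sU) = U * (D * (sU * U) * D) * sU by intros; noncomm_ring]
        rw [(Matrix.mem_unitaryGroup_iff').mp (Matrix.IsHermitian.eigenvectorUnitary hH).2,
          mul_one, Matrix.diagonal_mul_diagonal]
        congr 2
        ext i
        simp [sq]
      rw [h, Matrix.trace_mul_cycle,
        (Matrix.mem_unitaryGroup_iff').mp (Matrix.IsHermitian.eigenvectorUnitary hH).2, one_mul,
        Matrix.trace_diagonal]
    rw [hH.eq, h2]
    simp only [Complex.re_sum]
    refine Finset.sum_congr rfl fun j _ => ?_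
    rw [← Complex.ofReal_pow, Complex.ofReal_re]
  have h3 : (hH.eigenvalues i) ^ 2 ≤ (traceNorm H) ^ 2 := by
    calc (hH.eigenvalues i) ^ 2 ≤ ∑ j, (hH.eigenvalues j) ^ 2 :=
          Finset.single_le_sum (f := fun j => (hH.eigenvalues j) ^ 2)
            (fun j _ => sq_nonneg _) (Finset.mem_univ i)
      _ = ((Hᴴ * H).trace).re := htr.symm
      _ ≤ (traceNorm H) ^ 2 := by
          have := frob_le_traceNorm H
          have h4 := frob_sq_nonneg H
          nlinarith [traceNorm_nonneg' H, Real.sq_sqrt h4,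
            Real.sqrt_nonneg (((Hᴴ * H).trace).re)]
  calc |hH.eigenvalues i| = Real.sqrt ((hH.eigenvalues i) ^ 2) := (Real.sqrt_sq_eq_abs _).symm
    _ ≤ Real.sqrt ((traceNorm H) ^ 2) := Real.sqrt_le_sqrt h3
    _ = traceNorm H := Real.sqrt_sq (traceNorm_nonneg' H)

lemma conj_sub_smul (U : Matrix.unitaryGroup n ℂ) (g : n → ℝ) (c : ℝ) :
    (U : Matrix n n ℂ) * Matrix.diagonal (fun i => (g i : ℂ)) * star (U : Matrix n n ℂ)
      - (c : ℂ) • 1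
    = (U : Matrix n n ℂ) * Matrix.diagonal (fun i => ((g i - c : ℝ) : ℂ))
      * star (U : Matrix n n ℂ) := by
  have hd : Matrix.diagonal (fun i => ((g i - c : ℝ) : ℂ))
      = Matrix.diagonal (fun i => (g i : ℂ)) - (c : ℂ) • 1 := by
    rw [Matrix.smul_one_eq_diagonal, Matrix.diagonal_sub]
    congr 1; ext i; push_cast; ring
  rw [hd, Matrix.mul_sub, Matrix.sub_mul]
  congr 1
  rw [Matrix.mul_smul, mul_one, Matrix.smul_mul, (Matrix.mem_unitaryGroup_iff).mp U.2]

lemma conj_diag_psd (U : Matrix.unitaryGroup n ℂ) (f : n → ℝ) (hf : ∀ i, 0 ≤ f i) :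
    ((U : Matrix n n ℂ) * Matrix.diagonal (fun i => (f i : ℂ))
      * star (U : Matrix n n ℂ)).PosSemidef := by
  rw [Matrix.star_eq_conjTranspose]
  exact (Matrix.posSemidef_diagonal_iff.mpr fun i => by
    exact_mod_cast Complex.zero_le_real.mpr (hf i)).mul_mul_conjTranspose_same _

lemma eig_ge_of_psd {H : Matrix n n ℂ} (hH : H.IsHermitian) (c : ℝ)
    (h : (H - (c : ℂ) • 1).PosSemidef) (i : n) : c ≤ hH.eigenvalues i := by
  set v : n → ℂ := ⇑(hH.eigenvectorBasis i) with hvdef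
  have hv : dotProduct (star v) v = 1 := by
    rw [hvdef, dotProduct_comm, ← EuclideanSpace.inner_eq_star_dotProduct, inner_self_eq_norm_sq_to_K,
      hH.eigenvectorBasis.orthonormal.1 i]
    simp
  have h0 := h.re_dotProduct_nonneg v
  have hsm : hH.eigenvalues i • v = ((hH.eigenvalues i : ℂ)) • v := by
    ext k; simp [Complex.real_smul]
  have K : (star v) ⬝ᵥ ((H - (c : ℂ) • 1) *ᵥ v) = ((hH.eigenvalues i - c : ℝ) : ℂ) := by
    rw [Matrix.sub_mulVec, Matrix.smul_mulVec, Matrix.one_mulVec, hvdef,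
      hH.mulVec_eigenvectorBasis, ← hvdef, hsm, dotProduct_sub,
      dotProduct_smul, dotProduct_smul, hv, smul_eq_mul, smul_eq_mul]
    push_cast; ring
  rw [K] at h0
  simpa using h0

lemma psd_trace_re_nonneg {M : Matrix n n ℂ} (h : M.PosSemidef) : 0 ≤ M.trace.re := by
  rw [trace_eq_sum_eig' h.1]
  have : (∑ i, (h.1.eigenvalues i : ℂ)).re = ∑ i, h.1.eigenvalues i := by
    simp [Complex.re_sum]
  rw [this]
  exact Finset.sum_nonneg fun i _ => h.eigenvalues_nonneg i

lemma spectral_coe {H : Matrix n n ℂ} (hH : H.IsHermitian) :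
    H = (hH.eigenvectorUnitary : Matrix n n ℂ) *
      Matrix.diagonal (fun i => ((hH.eigenvalues i : ℝ) : ℂ)) *
      star (hH.eigenvectorUnitary : Matrix n n ℂ) :=
  hH.spectral_theorem

lemma sub_smul_psd {H : Matrix n n ℂ} (hH : H.IsHermitian) (c : ℝ)
    (h : ∀ i, c ≤ hH.eigenvalues i) : (H - (c : ℂ) • 1).PosSemidef := by
  rw [spectral_coe hH, conj_sub_smul]
  exact conj_diag_psd _ _ fun i => sub_nonneg.2 (h i)

lemma smul_sub_psd {H : Matrix n n ℂ} (hH : H.IsHermitian) (c : ℝ)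
    (h : ∀ i, hH.eigenvalues i ≤ c) : ((c : ℂ) • 1 - H).PosSemidef := by
  have e : H - (c : ℂ) • 1 = (hH.eigenvectorUnitary : Matrix n n ℂ) *
      Matrix.diagonal (fun i => ((hH.eigenvalues i - c : ℝ) : ℂ)) *
      star (hH.eigenvectorUnitary : Matrix n n ℂ) := by
    conv_lhs => rw [spectral_coe hH]
    rw [conj_sub_smul]
  have key : (c : ℂ) • 1 - H = (hH.eigenvectorUnitary : Matrix n n ℂ) *
      Matrix.diagonal (fun i => ((c - hH.eigenvalues i : ℝ) : ℂ)) *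
      star (hH.eigenvectorUnitary : Matrix n n ℂ) := by
    rw [← neg_sub H ((c : ℂ) • 1), e, ← Matrix.neg_mul, ← Matrix.mul_neg]
    congr 2
    ext i j
    by_cases hij : i = j <;> simp [Matrix.diagonal_apply, hij] <;> push_cast <;> ring
  rw [key]
  exact conj_diag_psd _ _ fun i => sub_nonneg.2 (h i)

lemma sqrt_eq_conj {A : Matrix n n ℂ} (hA : A.PosSemidef) :
    hA.sqrt = (hA.1.eigenvectorUnitary : Matrix n n ℂ) *
      Matrix.diagonal (fun i => ((Real.sqrt (hA.1.eigenvalues i) : ℝ) : ℂ)) *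
      star (hA.1.eigenvectorUnitary : Matrix n n ℂ) := rfl

lemma Matrix.PosSemidef.posSemidef_sqrt {A : Matrix n n ℂ} (hA : A.PosSemidef) :
    hA.sqrt.PosSemidef := by
  rw [sqrt_eq_conj]
  exact conj_diag_psd _ _ fun i => Real.sqrt_nonneg _

lemma Matrix.PosSemidef.sqrt_mul_self {A : Matrix n n ℂ} (hA : A.PosSemidef) :
    hA.sqrt * hA.sqrt = A := by
  rw [sqrt_eq_conj]
  conv_rhs => rw [spectral_coe hA.1]
  rw [show ∀ U D sU : Matrix n n ℂ,
      (U * D * sU) * (U * D * sU) = U * (D * (sU * U) * D) * sU by intros; noncomm_ring]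
  rw [(Matrix.mem_unitaryGroup_iff').mp hA.1.eigenvectorUnitary.2, mul_one,
    Matrix.diagonal_mul_diagonal]
  congr 2
  congr 1
  funext i
  rw [← Complex.ofReal_mul, Real.mul_self_sqrt (hA.eigenvalues_nonneg i)]

lemma sqrt_sub_smul_psd {A : Matrix n n ℂ} (hA : A.PosSemidef) (c : ℝ)
    (h : ∀ i, c ≤ hA.1.eigenvalues i) :
    (hA.sqrt - ((Real.sqrt c : ℝ) : ℂ) • 1).PosSemidef := by
  rw [sqrt_eq_conj hA, conj_sub_smul]
  exact conj_diag_psd _ _ fun i => sub_nonneg.2 (Real.sqrt_le_sqrt (h i))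

lemma trace_conj_ge {Δ M : Matrix n n ℂ} (hΔ : Δ.IsHermitian) (r : ℝ)
    (hM : (M - (r : ℂ) • 1).PosSemidef) :
    r * ((Δ * Δ).trace).re ≤ ((Δ * M * Δ).trace).re := by
  have hpsd : (Δ * (M - (r : ℂ) • 1) * Δ).PosSemidef := by
    have h := hM.mul_mul_conjTranspose_same Δ
    rwa [hΔ.eq] at h
  have htr := psd_trace_re_nonneg hpsd
  have hexp : Δ * (M - (r : ℂ) • 1) * Δ = Δ * M * Δ - (r : ℂ) • (Δ * Δ) := by
    rw [Matrix.mul_sub, Matrix.sub_mul, Matrix.mul_smul, mul_one, Matrix.smul_mul]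
  rw [hexp, Matrix.trace_sub, Matrix.trace_smul, Complex.sub_re] at htr
  have : ((r : ℂ) • (Δ * Δ).trace).re = r * ((Δ * Δ).trace).re := by
    simp [Complex.smul_re]
  rw [this] at htr
  linarith

lemma trace_conjT_mul_re (X Y : Matrix n n ℂ) :
    ((Xᴴ * Y).trace).re = ∑ p ∈ (Finset.univ ×ˢ Finset.univ : Finset (n × n)),
      ((starRingEnd ℂ) (X p.2 p.1) * Y p.2 p.1).re := by
  rw [Matrix.trace]
  simp only [Matrix.diag_apply, Matrix.mul_apply, Matrix.conjTranspose_apply]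
  rw [Finset.sum_product]
  simp [Complex.re_sum]

lemma cs_trace (X Y : Matrix n n ℂ) :
    ((Xᴴ * Y).trace).re ≤
      Real.sqrt (((Xᴴ * X).trace).re) * Real.sqrt (((Yᴴ * Y).trace).re) := by
  set s : Finset (n × n) := Finset.univ ×ˢ Finset.univ
  have hXX : ((Xᴴ * X).trace).re = ∑ p ∈ s, ‖X p.2 p.1‖ ^ 2 := by
    rw [trace_conjT_mul_re]
    refine Finset.sum_congr rfl fun p _ => ?_
    simp [Complex.conj_mul']
    norm_cast
  have hYY : ((Yᴴ * Y).trace).re = ∑ p ∈ s, ‖Y p.2 p.1‖ ^ 2 := by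
    rw [trace_conjT_mul_re]
    refine Finset.sum_congr rfl fun p _ => ?_
    simp [Complex.conj_mul']
    norm_cast
  have h1 : ((Xᴴ * Y).trace).re ≤
      ∑ p ∈ s, ‖X p.2 p.1‖ * ‖Y p.2 p.1‖ := by
    rw [trace_conjT_mul_re]
    refine Finset.sum_le_sum fun p _ => ?_
    calc ((starRingEnd ℂ) (X p.2 p.1) * Y p.2 p.1).re
        ≤ ‖(starRingEnd ℂ) (X p.2 p.1) * Y p.2 p.1‖ := Complex.re_le_norm _
      _ = ‖X p.2 p.1‖ * ‖Y p.2 p.1‖ := by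
          rw [norm_mul, Complex.norm_conj]
  have h2 : (∑ p ∈ s, ‖X p.2 p.1‖ * ‖Y p.2 p.1‖) ^ 2 ≤
      (∑ p ∈ s, ‖X p.2 p.1‖ ^ 2) * ∑ p ∈ s, ‖Y p.2 p.1‖ ^ 2 :=
    Finset.sum_mul_sq_le_sq_mul_sq s _ _
  have h3 : 0 ≤ ∑ p ∈ s, ‖X p.2 p.1‖ * ‖Y p.2 p.1‖ :=
    Finset.sum_nonneg fun p _ => mul_nonneg (norm_nonneg _) (norm_nonneg _)
  refine h1.trans ?_
  rw [hXX, hYY]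
  calc (∑ p ∈ s, ‖X p.2 p.1‖ * ‖Y p.2 p.1‖)
      = Real.sqrt ((∑ p ∈ s, ‖X p.2 p.1‖ * ‖Y p.2 p.1‖) ^ 2) :=
        (Real.sqrt_sq h3).symm
    _ ≤ Real.sqrt ((∑ p ∈ s, ‖X p.2 p.1‖ ^ 2) *
        ∑ p ∈ s, ‖Y p.2 p.1‖ ^ 2) := Real.sqrt_le_sqrt h2
    _ = Real.sqrt (∑ p ∈ s, ‖X p.2 p.1‖ ^ 2) *
        Real.sqrt (∑ p ∈ s, ‖Y p.2 p.1‖ ^ 2) := by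
          rw [Real.sqrt_mul (Finset.sum_nonneg fun p _ => sq_nonneg _)]

end Stmt13Helpers

set_option maxHeartbeats 2000000 in
/-- perturbation bound for the positive semidefinite square root in trace norm. -/


theorem stmt13 {n : ℕ} (A B : Matrix (Fin n) (Fin n) ℂ)
    (hA : A.PosSemidef) (hB : B.PosSemidef)
    (hclose : traceNorm (A - B) < eigMin hA.1) :
    traceNorm (hA.sqrt - hB.sqrt) ≤
      (n : ℝ) ^ 2 * traceNorm (A - B) / (2 * Real.sqrt (eigMin hA.1 - traceNorm (A - B))) := by
  rcases Nat.eq_zero_or_pos n with hn0 | hn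
  · exfalso
    subst hn0
    have h1 : traceNorm (A - B) = 0 := by
      rw [traceNorm_def']
      simp
    have h2 : eigMin hA.1 = 0 := by
      unfold eigMin
      exact Real.iInf_of_isEmpty _
    rw [h1, h2] at hclose
    exact lt_irrefl 0 hclose
  set t := traceNorm (A - B) with htdef
  have ht0 : 0 ≤ t := traceNorm_nonneg' _
  set lam := eigMin hA.1 with hlamdef
  have hlam_le : ∀ i, lam ≤ hA.1.eigenvalues i := fun i =>
    ciInf_le (Finite.bddBelow_range _) i
  set c := lam - t with hcdef
  have hc : 0 < c := sub_pos.2 hclose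
  have hct : c ≤ lam := by linarith
  have hAB_herm : (A - B).IsHermitian := hA.1.sub hB.1
  have heigAB : ∀ i, |hAB_herm.eigenvalues i| ≤ t := fun i => eig_abs_le_traceNorm hAB_herm i
  have h1 : (A - (lam : ℂ) • 1).PosSemidef := sub_smul_psd hA.1 lam hlam_le
  have h2 : ((t : ℂ) • 1 - (A - B)).PosSemidef :=
    smul_sub_psd hAB_herm t fun i => (abs_le.mp (heigAB i)).2
  have h3 : (B - (c : ℂ) • 1).PosSemidef := by
    have hcoe : ((c : ℝ) : ℂ) = (lam : ℂ) - (t : ℂ) := by rw [hcdef]; push_cast; ring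
    have heq : B - (c : ℂ) • 1 = (A - (lam : ℂ) • 1) + ((t : ℂ) • 1 - (A - B)) := by
      rw [hcoe, sub_smul]
      abel
    rw [heq]
    exact h1.add h2
  have h4 : ∀ i, c ≤ hB.1.eigenvalues i := eig_ge_of_psd hB.1 c h3
  have h5 : (hA.sqrt - ((Real.sqrt lam : ℝ) : ℂ) • 1).PosSemidef :=
    sqrt_sub_smul_psd hA lam hlam_le
  have h6 : (hB.sqrt - ((Real.sqrt c : ℝ) : ℂ) • 1).PosSemidef :=
    sqrt_sub_smul_psd hB c h4
  set Δ := hA.sqrt - hB.sqrt with hΔdef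
  have hΔ : Δ.IsHermitian := hA.posSemidef_sqrt.1.sub hB.posSemidef_sqrt.1
  have hdecomp : hA.sqrt * Δ + Δ * hB.sqrt = A - B := by
    rw [hΔdef, Matrix.mul_sub, Matrix.sub_mul, hA.sqrt_mul_self, hB.sqrt_mul_self]
    abel
  -- lower bound for tr(Δ (A-B))
  have hsplit : ((Δ * (A - B)).trace).re
      = ((Δ * hA.sqrt * Δ).trace).re + ((Δ * hB.sqrt * Δ).trace).re := by
    have e1 : Δ * (A - B) = Δ * (hA.sqrt * Δ) + Δ * (Δ * hB.sqrt) := by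
      rw [← hdecomp, Matrix.mul_add]
    have e2 : (Δ * (hA.sqrt * Δ)).trace = (Δ * hA.sqrt * Δ).trace := by
      rw [mul_assoc]
    have e3 : (Δ * (Δ * hB.sqrt)).trace = (Δ * hB.sqrt * Δ).trace :=
      Matrix.trace_mul_comm _ _
    rw [e1, Matrix.trace_add, Complex.add_re, e2, e3]
  have hlow : (Real.sqrt lam + Real.sqrt c) * ((Δ * Δ).trace).re
      ≤ ((Δ * (A - B)).trace).re := by
    have g1 := trace_conj_ge hΔ (Real.sqrt lam) h5
    have g2 := trace_conj_ge hΔ (Real.sqrt c) h6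
    rw [hsplit]
    linarith
  -- upper bound via Cauchy-Schwarz
  set NΔ := Real.sqrt (((Δᴴ * Δ).trace).re) with hNΔdef
  set NAB := Real.sqrt ((((A - B)ᴴ * (A - B)).trace).re) with hNABdef
  have hNΔ0 : 0 ≤ NΔ := Real.sqrt_nonneg _
  have hNΔsq : NΔ ^ 2 = ((Δᴴ * Δ).trace).re := Real.sq_sqrt (frob_sq_nonneg Δ)
  have hΔΔ : ((Δ * Δ).trace).re = ((Δᴴ * Δ).trace).re := by rw [hΔ.eq]
  have hup : ((Δ * (A - B)).trace).re ≤ NΔ * NAB := by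
    have : ((Δ * (A - B)).trace).re = ((Δᴴ * (A - B)).trace).re := by rw [hΔ.eq]
    rw [this]
    exact cs_trace Δ (A - B)
  have hkey : 2 * Real.sqrt c * NΔ ^ 2 ≤ NΔ * NAB := by
    have hsc : Real.sqrt c ≤ Real.sqrt lam := Real.sqrt_le_sqrt hct
    have := hlow.trans hup
    rw [hΔΔ, ← hNΔsq] at this
    nlinarith [Real.sqrt_nonneg c, sq_nonneg NΔ]
  have hscpos : 0 < Real.sqrt c := Real.sqrt_pos.2 hc
  have hNAB_le : NAB ≤ t := frob_le_traceNorm (A - B)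
  have hNΔle : NΔ ≤ NAB / (2 * Real.sqrt c) := by
    rcases eq_or_lt_of_le hNΔ0 with hz | hpos
    · rw [← hz]
      have hNAB0 : 0 ≤ NAB := Real.sqrt_nonneg _
      positivity
    · rw [le_div_iff₀ (by positivity)]
      have h2' : NΔ * (2 * Real.sqrt c) * NΔ ≤ NAB * NΔ := by nlinarith
      exact le_of_mul_le_mul_right h2' hpos
  have hmain : traceNorm Δ ≤ Real.sqrt n * NΔ := by
    have h := traceNorm_le_frob Δ
    rw [← hNΔdef] at h
    simpa [Fintype.card_fin] using h
  have hstep : NΔ ≤ t / (2 * Real.sqrt c) := by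
    refine hNΔle.trans ?_
    exact (div_le_div_iff_of_pos_right (mul_pos two_pos hscpos)).mpr hNAB_le
  have hfinal : traceNorm Δ ≤ Real.sqrt n * (t / (2 * Real.sqrt c)) :=
    hmain.trans (mul_le_mul_of_nonneg_left hstep (Real.sqrt_nonneg _))
  refine hfinal.trans ?_
  have hsn : Real.sqrt n ≤ (n : ℝ) ^ 2 := by
    have h1n : (1 : ℝ) ≤ (n : ℝ) := by exact_mod_cast hn
    have h2 : Real.sqrt n ≤ Real.sqrt (((n : ℝ) ^ 2) ^ 2) := Real.sqrt_le_sqrt (by nlinarith [sq_nonneg ((n:ℝ) - 1), sq_nonneg ((n:ℝ)^2 - 1), sq_nonneg (n:ℝ)])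
    rwa [Real.sqrt_sq (by positivity)] at h2
  calc Real.sqrt n * (t / (2 * Real.sqrt c)) = Real.sqrt n * t / (2 * Real.sqrt c) := by ring
    _ ≤ (n : ℝ) ^ 2 * t / (2 * Real.sqrt c) :=
      (div_le_div_iff_of_pos_right (mul_pos two_pos hscpos)).mpr (mul_le_mul_of_nonneg_right hsn ht0)
end

section
/- Let σ and σ' be n×n Hermitian positive semidefinite complex matrices with σ positive definite and ‖σ − σ'‖₁ < λ_min(σ). Then σ' is positive definite and ‖log σ' − log σ‖₂ ≤ n² · ‖σ − σ'‖₁ / ( λ_min(σ) − ‖σ − σ'‖₁ ). -/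
open Matrix BigOperators Finset
open scoped ComplexOrder

open Covert

section Aux

variable {n : ℕ}

private lemma aux_quadform {A : Matrix (Fin n) (Fin n) ℂ} (hA : A.IsHermitian) (x : Fin n → ℂ) :
    star x ⬝ᵥ A *ᵥ x =
      ((∑ i, hA.eigenvalues i *
        Complex.normSq ((star ((hA.eigenvectorUnitary : unitaryGroup (Fin n) ℂ) :
          Matrix (Fin n) (Fin n) ℂ) *ᵥ x) i) : ℝ) : ℂ) := by
  set U : Matrix (Fin n) (Fin n) ℂ :=
    ((hA.eigenvectorUnitary : unitaryGroup (Fin n) ℂ) : Matrix (Fin n) (Fin n) ℂ) with hU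
  set c : Fin n → ℂ := star U *ᵥ x with hc
  have h1 : A *ᵥ x = U *ᵥ (diagonal (Complex.ofReal ∘ hA.eigenvalues) *ᵥ c) := by
    conv_lhs => rw [hA.spectral_theorem]
    simp [mulVec_mulVec, hc, Matrix.mul_assoc]
    rfl
  have h2 : star x ᵥ* U = star c := by
    rw [hc, star_mulVec]
    simp [star_eq_conjTranspose]
  rw [h1, dotProduct_mulVec, h2]
  simp only [dotProduct, mulVec_diagonal, Pi.star_apply]
  push_cast
  congr 1
  ext i
  simp only [Function.comp_apply, Complex.normSq_eq_conj_mul_self, Complex.star_def]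
  ring

private lemma aux_normpres (U : unitaryGroup (Fin n) ℂ) (x : Fin n → ℂ) :
    ∑ i, Complex.normSq ((star (U : Matrix (Fin n) (Fin n) ℂ) *ᵥ x) i)
      = ∑ i, Complex.normSq (x i) := by
  have h : star (star (U : Matrix (Fin n) (Fin n) ℂ) *ᵥ x) ⬝ᵥ
      (star (U : Matrix (Fin n) (Fin n) ℂ) *ᵥ x) = star x ⬝ᵥ x := by
    rw [star_mulVec, dotProduct_mulVec, vecMul_vecMul]
    rw [show ((star (U : Matrix (Fin n) (Fin n) ℂ))ᴴ : Matrix (Fin n) (Fin n) ℂ)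
        = (U : Matrix (Fin n) (Fin n) ℂ) from star_star _,
      mem_unitaryGroup_iff.mp U.2, vecMul_one]
  have := congrArg Complex.re h
  simpa [dotProduct, Complex.add_re, Complex.normSq_eq_conj_mul_self, Complex.mul_re, Complex.normSq_apply] using this

private lemma aux_trace_eq_sum {A : Matrix (Fin n) (Fin n) ℂ} (hA : A.IsHermitian) :
    A.trace = ∑ i, (hA.eigenvalues i : ℂ) := by
  conv_lhs => rw [hA.spectral_theorem, Unitary.conjStarAlgAut_apply]
  rw [trace_mul_cycle, mem_unitaryGroup_iff'.mp hA.eigenvectorUnitary.2, Matrix.one_mul,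
    trace_diagonal]
  rfl

private lemma aux_frob_sq (X : Matrix (Fin n) (Fin n) ℂ) :
    ((Xᴴ * X).trace).re = ∑ j, ∑ i, Complex.normSq (X i j) := by
  simp [Matrix.trace, Matrix.mul_apply, dotProduct, Complex.normSq_eq_conj_mul_self, Matrix.diag,
    conjTranspose_apply, Complex.re_sum, Complex.normSq_apply]

private lemma aux_conj_inv (U V : unitaryGroup (Fin n) ℂ) (X : Matrix (Fin n) (Fin n) ℂ) :
    ((star (U : Matrix (Fin n) (Fin n) ℂ) * X * (V : Matrix (Fin n) (Fin n) ℂ))ᴴ *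
      (star (U : Matrix (Fin n) (Fin n) ℂ) * X * (V : Matrix (Fin n) (Fin n) ℂ))).trace
      = (Xᴴ * X).trace := by
  set U' : Matrix (Fin n) (Fin n) ℂ := (U : Matrix (Fin n) (Fin n) ℂ)
  set V' : Matrix (Fin n) (Fin n) ℂ := (V : Matrix (Fin n) (Fin n) ℂ)
  have hU : U' * star U' = 1 := mem_unitaryGroup_iff.mp U.2
  have hV : V' * star V' = 1 := mem_unitaryGroup_iff.mp V.2
  have h1 : (star U' * X * V')ᴴ = star V' * Xᴴ * U' := by
    simp [star_eq_conjTranspose, conjTranspose_mul, Matrix.mul_assoc]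
  rw [h1]
  rw [show star V' * Xᴴ * U' * (star U' * X * V') = star V' * (Xᴴ * ((U' * star U') * (X * V'))) by
    simp only [Matrix.mul_assoc], hU, Matrix.one_mul, trace_mul_comm]
  rw [show Xᴴ * (X * V') * star V' = Xᴴ * X * (V' * star V') by simp only [Matrix.mul_assoc],
    hV, Matrix.mul_one]

private lemma aux_log_lip {a b c : ℝ} (hc : 0 < c) (ha : c ≤ a) (hb : c ≤ b) :
    |Real.log a - Real.log b| ≤ |a - b| / c := by
  wlog h : b ≤ a generalizing a b
  · rw [abs_sub_comm, abs_sub_comm a b]; exact this hb ha (le_of_not_ge h)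
  have ha' : 0 < a := lt_of_lt_of_le hc ha
  have hb' : 0 < b := lt_of_lt_of_le hc hb
  rw [abs_of_nonneg (sub_nonneg.mpr (Real.log_le_log hb' h)),
    abs_of_nonneg (sub_nonneg.mpr h)]
  rw [← Real.log_div (ne_of_gt ha') (ne_of_gt hb')]
  calc Real.log (a / b) ≤ a / b - 1 := Real.log_le_sub_one_of_pos (by positivity)
    _ = (a - b) / b := by field_simp
    _ ≤ (a - b) / c := by gcongr

private lemma aux_traceNorm_nonneg (X : Matrix (Fin n) (Fin n) ℂ) : 0 ≤ traceNorm X :=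
  by unfold traceNorm; exact Finset.sum_nonneg fun _ _ => Real.sqrt_nonneg _

private lemma aux_frob_eq_sum (X : Matrix (Fin n) (Fin n) ℂ) :
    frobeniusNorm X = Real.sqrt (∑ j, ∑ i, Complex.normSq (X i j)) := by
  rw [frobeniusNorm, aux_frob_sq]

private lemma aux_frob_le_traceNorm (X : Matrix (Fin n) (Fin n) ℂ) :
    frobeniusNorm X ≤ traceNorm X := by
  rw [frobeniusNorm]
  have h1 : ((Xᴴ * X).trace).re
      = ∑ i, (Matrix.isHermitian_conjTranspose_mul_self X).eigenvalues i := by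
    have := congrArg Complex.re (aux_trace_eq_sum (Matrix.isHermitian_conjTranspose_mul_self X))
    simpa [Complex.re_sum] using this
  rw [h1]
  have h2 : ∑ i, (Matrix.isHermitian_conjTranspose_mul_self X).eigenvalues i
      ≤ (∑ i, Real.sqrt ((Matrix.isHermitian_conjTranspose_mul_self X).eigenvalues i)) ^ 2 := by
    have h3 : ∀ i ∈ Finset.univ,
        0 ≤ Real.sqrt ((Matrix.isHermitian_conjTranspose_mul_self X).eigenvalues i) :=
      fun i _ => Real.sqrt_nonneg _
    calc ∑ i, (Matrix.isHermitian_conjTranspose_mul_self X).eigenvalues i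
        = ∑ i, (Real.sqrt ((Matrix.isHermitian_conjTranspose_mul_self X).eigenvalues i)) ^ 2 := by
          refine Finset.sum_congr rfl fun i _ => ?_
          rw [Real.sq_sqrt (Matrix.eigenvalues_conjTranspose_mul_self_nonneg X i)]
      _ ≤ _ := Finset.sum_sq_le_sq_sum_of_nonneg h3
  calc Real.sqrt (∑ i, (Matrix.isHermitian_conjTranspose_mul_self X).eigenvalues i)
      ≤ Real.sqrt ((∑ i, Real.sqrt
          ((Matrix.isHermitian_conjTranspose_mul_self X).eigenvalues i)) ^ 2) :=
        Real.sqrt_le_sqrt h2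
    _ = traceNorm X := by
        rw [Real.sqrt_sq (Finset.sum_nonneg fun _ _ => Real.sqrt_nonneg _)]; rfl

/-- For Hermitian Δ, the Frobenius norm squared is the sum of squared eigenvalues. -/
private lemma aux_frob_herm_sq {Δ : Matrix (Fin n) (Fin n) ℂ} (hΔ : Δ.IsHermitian) :
    ((Δᴴ * Δ).trace).re = ∑ i, (hΔ.eigenvalues i) ^ 2 := by
  have hΔ' : Δᴴ = Δ := hΔ
  rw [hΔ']
  set U : Matrix (Fin n) (Fin n) ℂ :=
    ((hΔ.eigenvectorUnitary : unitaryGroup (Fin n) ℂ) : Matrix (Fin n) (Fin n) ℂ) with hU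
  set D : Matrix (Fin n) (Fin n) ℂ := diagonal ((RCLike.ofReal : ℝ → ℂ) ∘ hΔ.eigenvalues) with hD
  have h1 : Δ * Δ = U * (D * D) * star U := by
    conv_lhs => rw [hΔ.spectral_theorem, Unitary.conjStarAlgAut_apply]
    simp only [← hU, ← hD]
    rw [show U * D * star U * (U * D * star U) = U * (D * ((star U * U) * (D * star U))) by
      simp only [Matrix.mul_assoc], mem_unitaryGroup_iff'.mp hΔ.eigenvectorUnitary.2,
      Matrix.one_mul]
    simp only [Matrix.mul_assoc]
  rw [h1, trace_mul_cycle, mem_unitaryGroup_iff'.mp hΔ.eigenvectorUnitary.2, Matrix.one_mul,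
    hD, diagonal_mul_diagonal, trace_diagonal]
  rw [Complex.re_sum]
  refine Finset.sum_congr rfl fun i _ => ?_
  simp [Function.comp_apply, ← Complex.ofReal_mul, sq]

/-- eigenvalue absolute bound by Frobenius norm -/
private lemma aux_eig_abs_le_frob {Δ : Matrix (Fin n) (Fin n) ℂ} (hΔ : Δ.IsHermitian) (i : Fin n) :
    |hΔ.eigenvalues i| ≤ frobeniusNorm Δ := by
  rw [frobeniusNorm, aux_frob_herm_sq hΔ]
  rw [show |hΔ.eigenvalues i| = Real.sqrt ((hΔ.eigenvalues i) ^ 2) from (Real.sqrt_sq_eq_abs _).symm]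
  apply Real.sqrt_le_sqrt
  exact Finset.single_le_sum (f := fun j => (hΔ.eigenvalues j) ^ 2) (fun j _ => sq_nonneg _) (Finset.mem_univ i)

private lemma aux_eigMin_le {A : Matrix (Fin n) (Fin n) ℂ} (hA : A.IsHermitian) (i : Fin n) :
    eigMin hA ≤ hA.eigenvalues i :=
  ciInf_le (Finite.bddBelow_range _) i

private lemma aux_sum_normSq_eigvec {A : Matrix (Fin n) (Fin n) ℂ} (hA : A.IsHermitian)
    (j : Fin n) : ∑ i, Complex.normSq (hA.eigenvectorBasis j i) = 1 := by
  have h := hA.eigenvectorBasis.orthonormal.1 j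
  rw [EuclideanSpace.norm_eq] at h
  have h2 : ∑ i, ‖hA.eigenvectorBasis j i‖ ^ 2 = 1 := by
    rw [← Real.sq_sqrt (Finset.sum_nonneg fun (i : Fin n) _ =>
      sq_nonneg ‖hA.eigenvectorBasis j i‖), h]
    norm_num
  rw [← h2]
  exact Finset.sum_congr rfl fun i _ => (Complex.normSq_eq_norm_sq _).trans (by
    rfl)

private lemma aux_eig_lower {A B : Matrix (Fin n) (Fin n) ℂ} (hA : A.IsHermitian)
    (hB : B.IsHermitian) (j : Fin n) :
    eigMin hA - frobeniusNorm (A - B) ≤ hB.eigenvalues j := by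
  set v : Fin n → ℂ := ⇑(hB.eigenvectorBasis j) with hv
  have hnorm : ∑ i, Complex.normSq (v i) = 1 := aux_sum_normSq_eigvec hB j
  have heq : hB.eigenvalues j = (star v ⬝ᵥ B *ᵥ v).re := by
    have := hB.eigenvalues_eq j
    simpa using this
  have hsplit : star v ⬝ᵥ B *ᵥ v = star v ⬝ᵥ A *ᵥ v - star v ⬝ᵥ (A - B) *ᵥ v := by
    rw [sub_mulVec, dotProduct_sub]; ring
  have hAv : eigMin hA ≤ (star v ⬝ᵥ A *ᵥ v).re := by
    rw [aux_quadform hA v, Complex.ofReal_re]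
    calc eigMin hA = eigMin hA * ∑ i, Complex.normSq
          ((star ((hA.eigenvectorUnitary : unitaryGroup (Fin n) ℂ) :
            Matrix (Fin n) (Fin n) ℂ) *ᵥ v) i) := by
          rw [aux_normpres hA.eigenvectorUnitary v, hnorm, mul_one]
      _ = ∑ i, eigMin hA * Complex.normSq
          ((star ((hA.eigenvectorUnitary : unitaryGroup (Fin n) ℂ) :
            Matrix (Fin n) (Fin n) ℂ) *ᵥ v) i) := by rw [Finset.mul_sum]
      _ ≤ _ := Finset.sum_le_sum fun i _ =>
          mul_le_mul_of_nonneg_right (aux_eigMin_le hA i) (Complex.normSq_nonneg _)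
  have hΔ : (A - B).IsHermitian := hA.sub hB
  have hDv : (star v ⬝ᵥ (A - B) *ᵥ v).re ≤ frobeniusNorm (A - B) := by
    rw [aux_quadform hΔ v, Complex.ofReal_re]
    calc ∑ i, hΔ.eigenvalues i * Complex.normSq
          ((star ((hΔ.eigenvectorUnitary : unitaryGroup (Fin n) ℂ) :
            Matrix (Fin n) (Fin n) ℂ) *ᵥ v) i)
        ≤ ∑ i, frobeniusNorm (A - B) * Complex.normSq
          ((star ((hΔ.eigenvectorUnitary : unitaryGroup (Fin n) ℂ) :
            Matrix (Fin n) (Fin n) ℂ) *ᵥ v) i) := by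
          refine Finset.sum_le_sum fun i _ => mul_le_mul_of_nonneg_right ?_
            (Complex.normSq_nonneg _)
          exact (le_abs_self _).trans (aux_eig_abs_le_frob hΔ i)
      _ = frobeniusNorm (A - B) := by
          rw [← Finset.mul_sum, aux_normpres hΔ.eigenvectorUnitary v, hnorm, mul_one]
  have := sub_le_sub hAv hDv
  rw [heq, hsplit, Complex.sub_re]
  linarith

private lemma aux_matLog_eq {A : Matrix (Fin n) (Fin n) ℂ} (hA : A.IsHermitian) :
    matLog A = ((hA.eigenvectorUnitary : unitaryGroup (Fin n) ℂ) : Matrix (Fin n) (Fin n) ℂ) *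
      diagonal ((RCLike.ofReal : ℝ → ℂ) ∘ Real.log ∘ hA.eigenvalues) *
      star ((hA.eigenvectorUnitary : unitaryGroup (Fin n) ℂ) : Matrix (Fin n) (Fin n) ℂ) := by
  rw [matLog, matFun, dif_pos hA, Matrix.IsHermitian.cfc]
  simp only [Unitary.conjStarAlgAut_apply]

private lemma aux_left_diag (Uu : unitaryGroup (Fin n) ℂ) (d : Fin n → ℂ)
    (X : Matrix (Fin n) (Fin n) ℂ) :
    star (Uu : Matrix (Fin n) (Fin n) ℂ) *
      ((Uu : Matrix (Fin n) (Fin n) ℂ) * diagonal d * star (Uu : Matrix (Fin n) (Fin n) ℂ)) * X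
      = diagonal d * (star (Uu : Matrix (Fin n) (Fin n) ℂ) * X) := by
  set U' : Matrix (Fin n) (Fin n) ℂ := (Uu : Matrix (Fin n) (Fin n) ℂ)
  rw [show star U' * (U' * diagonal d * star U') * X
      = (star U' * U') * (diagonal d * (star U' * X)) by simp only [Matrix.mul_assoc],
    mem_unitaryGroup_iff'.mp Uu.2, Matrix.one_mul]

private lemma aux_right_diag (Uu : unitaryGroup (Fin n) ℂ) (d : Fin n → ℂ)
    (X : Matrix (Fin n) (Fin n) ℂ) :
    X * ((Uu : Matrix (Fin n) (Fin n) ℂ) * diagonal d * star (Uu : Matrix (Fin n) (Fin n) ℂ)) *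
      (Uu : Matrix (Fin n) (Fin n) ℂ)
      = (X * (Uu : Matrix (Fin n) (Fin n) ℂ)) * diagonal d := by
  set U' : Matrix (Fin n) (Fin n) ℂ := (Uu : Matrix (Fin n) (Fin n) ℂ)
  rw [show X * (U' * diagonal d * star U') * U'
      = (X * U') * diagonal d * (star U' * U') by simp only [Matrix.mul_assoc],
    mem_unitaryGroup_iff'.mp Uu.2, Matrix.mul_one]

end Aux

/-- perturbation bound for the matrix logarithm in Frobenius norm. -/
theorem stmt14 {n : ℕ} (σ σ' : Matrix (Fin n) (Fin n) ℂ)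
    (hσ : σ.PosDef) (hσ' : σ'.PosSemidef)
    (hclose : traceNorm (σ - σ') < eigMin hσ.1) :
    σ'.PosDef ∧
    frobeniusNorm (matLog σ' - matLog σ) ≤
      (n : ℝ) ^ 2 * traceNorm (σ - σ') / (eigMin hσ.1 - traceNorm (σ - σ')) := by
  have hB : σ'.IsHermitian := hσ'.1
  rcases Nat.eq_zero_or_pos n with hn | hn
  · exfalso
    subst hn
    rw [show traceNorm (σ - σ') = 0 from by simp [traceNorm],
      show eigMin hσ.1 = 0 from Real.iInf_of_isEmpty _] at hclose
    exact lt_irrefl 0 hclose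
  have hδ0 : 0 ≤ traceNorm (σ - σ') := aux_traceNorm_nonneg _
  have hc : 0 < eigMin hσ.1 - traceNorm (σ - σ') := sub_pos.mpr hclose
  set c : ℝ := eigMin hσ.1 - traceNorm (σ - σ') with hcdef
  have hμ : ∀ j, c ≤ hB.eigenvalues j := fun j => by
    have h1 := aux_eig_lower hσ.1 hB j
    have h2 := aux_frob_le_traceNorm (σ - σ')
    rw [hcdef]; linarith
  have hlam : ∀ i, c ≤ hσ.1.eigenvalues i := fun i => by
    have := aux_eigMin_le hσ.1 i
    rw [hcdef]; linarith
  constructor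
  · refine Matrix.PosDef.of_dotProduct_mulVec_pos hB fun x hx => ?_
    rw [aux_quadform hB x]
    rw [show (0 : ℂ) = ((0 : ℝ) : ℂ) from rfl]
    rw [Complex.real_lt_real]
    have hcne : star ((hB.eigenvectorUnitary : unitaryGroup (Fin n) ℂ) :
        Matrix (Fin n) (Fin n) ℂ) *ᵥ x ≠ 0 := by
      intro h0
      apply hx
      have hxe : x = ((hB.eigenvectorUnitary : unitaryGroup (Fin n) ℂ) :
          Matrix (Fin n) (Fin n) ℂ) *ᵥ (star ((hB.eigenvectorUnitary : unitaryGroup (Fin n) ℂ) :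
          Matrix (Fin n) (Fin n) ℂ) *ᵥ x) := by
        rw [mulVec_mulVec, mem_unitaryGroup_iff.mp hB.eigenvectorUnitary.2, one_mulVec]
      rw [hxe, h0, mulVec_zero]
    obtain ⟨i, hi⟩ := Function.ne_iff.mp hcne
    refine Finset.sum_pos' (fun j _ => mul_nonneg (le_of_lt (lt_of_lt_of_le hc (hμ j)))
      (Complex.normSq_nonneg _)) ⟨i, Finset.mem_univ i, ?_⟩
    exact mul_pos (lt_of_lt_of_le hc (hμ i)) (Complex.normSq_pos.mpr hi)
  · -- the Frobenius norm bound
    set U : Matrix (Fin n) (Fin n) ℂ :=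
      ((hσ.1.eigenvectorUnitary : unitaryGroup (Fin n) ℂ) : Matrix (Fin n) (Fin n) ℂ) with hUdef
    set V : Matrix (Fin n) (Fin n) ℂ :=
      ((hB.eigenvectorUnitary : unitaryGroup (Fin n) ℂ) : Matrix (Fin n) (Fin n) ℂ) with hVdef
    set W : Matrix (Fin n) (Fin n) ℂ := star U * V with hWdef
    set Y : Matrix (Fin n) (Fin n) ℂ := star U * (matLog σ' - matLog σ) * V with hYdef
    set Z : Matrix (Fin n) (Fin n) ℂ := star U * (σ' - σ) * V with hZdef
    have hlog1 : star U * matLog σ * V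
        = diagonal ((RCLike.ofReal : ℝ → ℂ) ∘ Real.log ∘ hσ.1.eigenvalues) * W := by
      rw [aux_matLog_eq hσ.1]
      exact aux_left_diag hσ.1.eigenvectorUnitary _ V
    have hlog2 : star U * matLog σ' * V
        = W * diagonal ((RCLike.ofReal : ℝ → ℂ) ∘ Real.log ∘ hB.eigenvalues) := by
      rw [aux_matLog_eq hB]
      exact aux_right_diag hB.eigenvectorUnitary _ (star U)
    have hm1 : star U * σ * V
        = diagonal ((RCLike.ofReal : ℝ → ℂ) ∘ hσ.1.eigenvalues) * W := by
      conv_lhs => rw [hσ.1.spectral_theorem]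
      exact aux_left_diag hσ.1.eigenvectorUnitary _ V
    have hm2 : star U * σ' * V
        = W * diagonal ((RCLike.ofReal : ℝ → ℂ) ∘ hB.eigenvalues) := by
      conv_lhs => rw [hB.spectral_theorem]
      exact aux_right_diag hB.eigenvectorUnitary _ (star U)
    have hY : Y = W * diagonal ((RCLike.ofReal : ℝ → ℂ) ∘ Real.log ∘ hB.eigenvalues)
        - diagonal ((RCLike.ofReal : ℝ → ℂ) ∘ Real.log ∘ hσ.1.eigenvalues) * W := by
      rw [hYdef, mul_sub, sub_mul, hlog1, hlog2]
    have hZ : Z = W * diagonal ((RCLike.ofReal : ℝ → ℂ) ∘ hB.eigenvalues)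
        - diagonal ((RCLike.ofReal : ℝ → ℂ) ∘ hσ.1.eigenvalues) * W := by
      rw [hZdef, mul_sub, sub_mul, hm1, hm2]
    have hYij : ∀ i j, Complex.normSq (Y i j) = Complex.normSq (W i j) *
        (Real.log (hB.eigenvalues j) - Real.log (hσ.1.eigenvalues i)) ^ 2 := by
      intro i j
      rw [hY]
      rw [show (W * diagonal ((RCLike.ofReal : ℝ → ℂ) ∘ Real.log ∘ hB.eigenvalues)
          - diagonal ((RCLike.ofReal : ℝ → ℂ) ∘ Real.log ∘ hσ.1.eigenvalues) * W) i j
          = W i j * ((Real.log (hB.eigenvalues j) : ℂ))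
            - ((Real.log (hσ.1.eigenvalues i) : ℂ)) * W i j from by
        simp [Matrix.sub_apply, Matrix.mul_diagonal, Matrix.diagonal_mul]]
      rw [show W i j * ((Real.log (hB.eigenvalues j) : ℂ))
            - ((Real.log (hσ.1.eigenvalues i) : ℂ)) * W i j
          = W i j * (((Real.log (hB.eigenvalues j) - Real.log (hσ.1.eigenvalues i) : ℝ)) : ℂ) from by
        push_cast; ring]
      rw [Complex.normSq_mul, Complex.normSq_ofReal]
      ring
    have hZij : ∀ i j, Complex.normSq (Z i j) = Complex.normSq (W i j) *
        (hB.eigenvalues j - hσ.1.eigenvalues i) ^ 2 := by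
      intro i j
      rw [hZ]
      rw [show (W * diagonal ((RCLike.ofReal : ℝ → ℂ) ∘ hB.eigenvalues)
          - diagonal ((RCLike.ofReal : ℝ → ℂ) ∘ hσ.1.eigenvalues) * W) i j
          = W i j * ((hB.eigenvalues j : ℂ)) - ((hσ.1.eigenvalues i : ℂ)) * W i j from by
        simp [Matrix.sub_apply, Matrix.mul_diagonal, Matrix.diagonal_mul]]
      rw [show W i j * ((hB.eigenvalues j : ℂ)) - ((hσ.1.eigenvalues i : ℂ)) * W i j
          = W i j * (((hB.eigenvalues j - hσ.1.eigenvalues i : ℝ)) : ℂ) from by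
        push_cast; ring]
      rw [Complex.normSq_mul, Complex.normSq_ofReal]
      ring
    have hfrobY : frobeniusNorm (matLog σ' - matLog σ)
        = Real.sqrt (∑ j, ∑ i, Complex.normSq (Y i j)) := by
      rw [frobeniusNorm, ← aux_conj_inv hσ.1.eigenvectorUnitary hB.eigenvectorUnitary
        (matLog σ' - matLog σ), aux_frob_sq]
    have hfrobZ : frobeniusNorm (σ' - σ)
        = Real.sqrt (∑ j, ∑ i, Complex.normSq (Z i j)) := by
      rw [frobeniusNorm, ← aux_conj_inv hσ.1.eigenvectorUnitary hB.eigenvectorUnitary (σ' - σ),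
        aux_frob_sq]
    have hsum : ∑ j, ∑ i, Complex.normSq (Y i j)
        ≤ (∑ j, ∑ i, Complex.normSq (Z i j)) / c ^ 2 := by
      rw [Finset.sum_div]
      refine Finset.sum_le_sum fun j _ => ?_
      rw [Finset.sum_div]
      refine Finset.sum_le_sum fun i _ => ?_
      rw [hYij i j, hZij i j]
      have hlip : |Real.log (hB.eigenvalues j) - Real.log (hσ.1.eigenvalues i)|
          ≤ |hB.eigenvalues j - hσ.1.eigenvalues i| / c := aux_log_lip hc (hμ j) (hlam i)
      have hsq : (Real.log (hB.eigenvalues j) - Real.log (hσ.1.eigenvalues i)) ^ 2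
          ≤ (hB.eigenvalues j - hσ.1.eigenvalues i) ^ 2 / c ^ 2 := by
        rw [← sq_abs (Real.log (hB.eigenvalues j) - Real.log (hσ.1.eigenvalues i)),
          ← sq_abs (hB.eigenvalues j - hσ.1.eigenvalues i), ← div_pow]
        exact pow_le_pow_left₀ (abs_nonneg _) hlip 2
      rw [mul_div_assoc]
      have hW0 : (0:ℝ) ≤ Complex.normSq (W i j) := Complex.normSq_nonneg _
      nlinarith [hsq, hW0]
    have hfin : frobeniusNorm (matLog σ' - matLog σ) ≤ traceNorm (σ - σ') / c := by
      rw [hfrobY]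
      calc Real.sqrt (∑ j, ∑ i, Complex.normSq (Y i j))
          ≤ Real.sqrt ((∑ j, ∑ i, Complex.normSq (Z i j)) / c ^ 2) := Real.sqrt_le_sqrt hsum
        _ = Real.sqrt (∑ j, ∑ i, Complex.normSq (Z i j)) / c := by
            rw [Real.sqrt_div (Finset.sum_nonneg fun j _ => Finset.sum_nonneg fun i _ =>
              Complex.normSq_nonneg _), Real.sqrt_sq hc.le]
        _ = frobeniusNorm (σ' - σ) / c := by rw [hfrobZ]
        _ = frobeniusNorm (σ - σ') / c := by
            rw [frobeniusNorm, frobeniusNorm, show σ' - σ = -(σ - σ') from (neg_sub _ _).symm,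
              conjTranspose_neg, neg_mul_neg]
        _ ≤ traceNorm (σ - σ') / c := by
            gcongr
            exact aux_frob_le_traceNorm _
    refine hfin.trans ?_
    rw [hcdef]
    have hn1 : (1 : ℝ) ≤ (n : ℝ) := by exact_mod_cast hn
    have hn2 : 1 ≤ (n : ℝ) ^ 2 := by nlinarith
    gcongr
    nlinarith
end

section
/- Let X be a finite set, P a probability mass function on X, and (ρ_x)_{x∈X}, (σ_x)_{x∈X} two families of density matrices on ℂ^d such that ‖ρ_x − σ_x‖₁ ≤ δ for every x ∈ X, where 0 < δ ≤ e⁻¹. Then I(P, σ) ≥ I(P, ρ) − 2δ·log(d/δ). -/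
open Matrix BigOperators Finset
open scoped ComplexOrder

open Covert


section AuxClassical
open Real Finset

-- Sub-lemma A: subadditivity of negMulLog
lemma nml_subadd {x e : ℝ} (hx : 0 ≤ x) (he : 0 ≤ e) :
    negMulLog (x + e) ≤ negMulLog x + negMulLog e := by
  have h1 : x * log x ≤ x * log (x + e) := by
    rcases eq_or_lt_of_le hx with h | h
    · simp [← h]
    · exact mul_le_mul_of_nonneg_left (Real.log_le_log h (by linarith)) hx
  have h2 : e * log e ≤ e * log (x + e) := by
    rcases eq_or_lt_of_le he with h | h
    · simp [← h]
    · exact mul_le_mul_of_nonneg_left (Real.log_le_log h (by linarith)) he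
  simp only [negMulLog, neg_mul]
  nlinarith [h1, h2]

-- Sub-lemma B
lemma nml_lower {y e : ℝ} (hy : 0 ≤ y) (he : 0 ≤ e) (h1 : y + e ≤ 1) :
    negMulLog y ≤ negMulLog (y + e) + e := by
  rcases eq_or_lt_of_le hy with h | hy'
  · have : negMulLog e ≥ 0 := negMulLog_nonneg he (by linarith)
    simp only [← h, zero_add, negMulLog_zero]
    linarith
  · have hye : 0 < y + e := by linarith
    have hlog : log (y + e) - log y ≤ e / y := by
      have := Real.log_le_sub_one_of_pos (show 0 < (y+e)/y by positivity)
      rw [Real.log_div (by positivity) (by positivity)] at this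
      have : log (y+e) - log y ≤ (y+e)/y - 1 := this
      calc log (y+e) - log y ≤ (y+e)/y - 1 := this
        _ = e / y := by field_simp; ring
    have hlog2 : log (y + e) ≤ 0 := Real.log_nonpos (by linarith) h1
    have key : (y + e) * log (y + e) - y * log y ≤ e := by
      have expand : (y + e) * log (y + e) - y * log y
          = y * (log (y+e) - log y) + e * log (y+e) := by ring
      have t1 : y * (log (y+e) - log y) ≤ y * (e / y) :=
        mul_le_mul_of_nonneg_left hlog hy
      have t2 : e * log (y+e) ≤ 0 := mul_nonpos_of_nonneg_of_nonpos he hlog2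
      have : y * (e / y) = e := by field_simp
      linarith
    simp only [negMulLog, neg_mul]
    linarith

-- Sub-lemma C
lemma le_nml {e : ℝ} (he : 0 ≤ e) (he1 : e ≤ Real.exp (-1)) : e ≤ negMulLog e := by
  rcases eq_or_lt_of_le he with h | h
  · simp [← h]
  · have : log e ≤ -1 := by
      calc log e ≤ log (Real.exp (-1)) := Real.log_le_log h he1
        _ = -1 := Real.log_exp _
    have : 1 ≤ -log e := by linarith
    calc e = e * 1 := (mul_one e).symm
      _ ≤ e * (-log e) := mul_le_mul_of_nonneg_left this he
      _ = negMulLog e := by simp only [negMulLog]; ring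

-- pointwise Fannes lemma
lemma nml_pointwise {x y : ℝ} (hx0 : 0 ≤ x) (hx1 : x ≤ 1) (hy0 : 0 ≤ y) (hy1 : y ≤ 1)
    (hd : |x - y| ≤ Real.exp (-1)) :
    negMulLog y - negMulLog x ≤ negMulLog |x - y| := by
  rcases le_or_gt x y with h | h
  · have : |x - y| = y - x := by rw [abs_sub_comm]; exact abs_of_nonneg (by linarith)
    rw [this]
    have := nml_subadd hx0 (show 0 ≤ y - x by linarith)
    simp only [add_sub_cancel] at this
    linarith [show negMulLog (x + (y-x)) = negMulLog y by ring_nf]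
  · have habs : |x - y| = x - y := abs_of_pos (by linarith)
    rw [habs]
    have hB := nml_lower hy0 (show 0 ≤ x - y by linarith) (show y + (x-y) ≤ 1 by linarith)
    have hxy : y + (x - y) = x := by ring
    rw [hxy] at hB
    have hC := le_nml (show 0 ≤ x - y by linarith) (habs ▸ hd)
    linarith

-- S8: classical entropy-sum bound
lemma sum_nml_le {n : Type*} [Fintype n] [Nonempty n] {δ : ℝ} (ε : n → ℝ)
    (hε : ∀ i, 0 ≤ ε i) (hs : ∑ i, ε i ≤ δ) (hδ0 : 0 < δ) (hδ1 : δ ≤ Real.exp (-1)) :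
    ∑ i, negMulLog (ε i) ≤ δ * Real.log ((Fintype.card n : ℝ) / δ) := by
  set d : ℝ := (Fintype.card n : ℝ) with hd
  have hd1 : 1 ≤ d := by
    have : 1 ≤ Fintype.card n := Fintype.card_pos
    rw [hd]; exact_mod_cast this
  have hL : 1 ≤ Real.log (d / δ) := by
    rw [Real.le_log_iff_exp_le (by positivity)]
    have h1 : Real.exp 1 ≤ 1 / δ := by
      rw [le_div_iff₀ hδ0]
      calc Real.exp 1 * δ ≤ Real.exp 1 * Real.exp (-1) :=
            mul_le_mul_of_nonneg_left hδ1 (Real.exp_pos 1).le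
        _ = 1 := by rw [← Real.exp_add]; simp
    calc Real.exp 1 ≤ 1 / δ := h1
      _ ≤ d / δ := by gcongr
  -- Jensen step
  set s : ℝ := ∑ i, ε i with hsdef
  have hs0 : 0 ≤ s := Finset.sum_nonneg fun i _ => hε i
  have hcard : (0:ℝ) < d := by linarith
  have hJ : ∑ i, negMulLog (ε i) ≤ d * negMulLog (s / d) := by
    have hjen := Real.concaveOn_negMulLog.le_map_sum
      (t := Finset.univ) (w := fun _ : n => 1 / d) (p := ε)
      (fun i _ => by positivity)
      (by simp only [Finset.sum_const, Finset.card_univ, nsmul_eq_mul, ← hd]; field_simp)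
      (fun i _ => Set.mem_Ici.mpr (hε i))
    simp only [smul_eq_mul] at hjen
    have h1 : ∑ i, (1/d) * ε i = s / d := by
      rw [← Finset.mul_sum]; ring
    have h2 : ∑ i, (1/d) * negMulLog (ε i) = (1/d) * ∑ i, negMulLog (ε i) := by
      rw [← Finset.mul_sum]
    rw [h1, h2] at hjen
    calc ∑ i, negMulLog (ε i) = d * ((1/d) * ∑ i, negMulLog (ε i)) := by
          field_simp
      _ ≤ d * negMulLog (s / d) := mul_le_mul_of_nonneg_left hjen (by positivity)
  rcases eq_or_lt_of_le hs0 with h0 | hspos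
  · have : ∀ i ∈ Finset.univ, ε i = 0 := fun i _ =>
      le_antisymm (by
        have := Finset.single_le_sum (fun j _ => hε j) (Finset.mem_univ i)
        rw [← hsdef, ← h0] at this; linarith) (hε i)
    have : ∑ i, negMulLog (ε i) = 0 := by
      apply Finset.sum_eq_zero; intro i hi; rw [this i hi]; simp
    rw [this]; positivity
  · have hsd : d * negMulLog (s / d) = s * Real.log (d / s) := by
      simp only [Real.negMulLog, neg_mul]
      rw [Real.log_div hspos.ne' (by positivity), Real.log_div (by positivity) hspos.ne']
      field_simp
      ring
    have hsδ : s ≤ δ := hs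
    have hsplit : Real.log (d / s) = Real.log (d / δ) + Real.log (δ / s) := by
      rw [← Real.log_mul (by positivity) (by positivity)]
      congr 1
      field_simp
    have hlog2 : Real.log (δ / s) ≤ δ / s - 1 := Real.log_le_sub_one_of_pos (by positivity)
    have key : s * Real.log (d / s) ≤ δ * Real.log (d / δ) := by
      have e1 : s * Real.log (d / s) = s * Real.log (d / δ) + s * Real.log (δ / s) := by
        rw [hsplit]; ring
      have e2 : s * Real.log (δ / s) ≤ δ - s := by
        calc s * Real.log (δ / s) ≤ s * (δ / s - 1) := mul_le_mul_of_nonneg_left hlog2 hs0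
          _ = δ - s := by field_simp
      have e3 : δ - s ≤ (δ - s) * Real.log (d / δ) := by
        nlinarith [hL, sub_nonneg.mpr hsδ]
      nlinarith
    linarith [hJ, hsd ▸ key]

end AuxClassical

section AuxQuantum
open Matrix Finset
open scoped ComplexOrder

variable {n : Type*} [Fintype n] [DecidableEq n]

lemma star_eq_conj (z : ℂ) : star z = (starRingEnd ℂ) z := rfl

lemma conj_diag_apply (N : Matrix n n ℂ) (g : n → ℂ) (i : n) :
    (N * Matrix.diagonal g * star N) i i = ∑ j, (Complex.normSq (N i j) : ℂ) * g j := by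
  rw [Matrix.star_eq_conjTranspose, Matrix.mul_apply]
  congr 1 with k
  rw [Matrix.mul_diagonal, Matrix.conjTranspose_apply]
  rw [show N i k * g k * star (N i k) = N i k * star (N i k) * g k by ring]
  rw [star_eq_conj, Complex.mul_conj (N i k)]

lemma row_normSq_sum {N : Matrix n n ℂ} (hN : N * star N = 1) (i : n) :
    ∑ j, Complex.normSq (N i j) = 1 := by
  have h := congrFun (congrFun hN i) i
  rw [Matrix.mul_apply, Matrix.one_apply_eq] at h
  have h2 : ∑ j, (Complex.normSq (N i j) : ℂ) = 1 := by
    rw [← h]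
    congr 1 with j
    rw [Matrix.star_eq_conjTranspose, Matrix.conjTranspose_apply, star_eq_conj,
      Complex.mul_conj (N i j)]
  have := Complex.ofReal_inj.mp (by push_cast at h2 ⊢; exact h2 :
    ((∑ j, Complex.normSq (N i j) : ℝ) : ℂ) = ((1:ℝ):ℂ))
  exact this

lemma col_normSq_sum {N : Matrix n n ℂ} (hN : star N * N = 1) (j : n) :
    ∑ i, Complex.normSq (N i j) = 1 := by
  have h := congrFun (congrFun hN j) j
  rw [Matrix.mul_apply, Matrix.one_apply_eq] at h
  have h2 : ∑ i, (Complex.normSq (N i j) : ℂ) = 1 := by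
    rw [← h]
    congr 1 with i
    rw [Matrix.star_eq_conjTranspose, Matrix.conjTranspose_apply, star_eq_conj,
      mul_comm, Complex.mul_conj (N i j)]
  have := Complex.ofReal_inj.mp (by push_cast at h2 ⊢; exact h2 :
    ((∑ i, Complex.normSq (N i j) : ℝ) : ℂ) = ((1:ℝ):ℂ))
  exact this

lemma rcOfReal : (RCLike.ofReal : ℝ → ℂ) = Complex.ofReal := rfl

/-- Master decomposition: diagonal entries of `star N * A * N` for Hermitian `A`
are bistochastic mixtures of eigenvalues of `A`. -/
lemma exists_bistochastic {A : Matrix n n ℂ} (hA : A.IsHermitian) (N : Matrix n n ℂ)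
    (hN1 : N * star N = 1) (hN2 : star N * N = 1) :
    ∃ w : n → n → ℝ, (∀ i j, 0 ≤ w i j) ∧ (∀ i, ∑ j, w i j = 1) ∧ (∀ j, ∑ i, w i j = 1) ∧
      ∀ i, ((star N * A * N) i i).re = ∑ j, w i j * hA.eigenvalues j := by
  set U : Matrix n n ℂ := (hA.eigenvectorUnitary : Matrix n n ℂ) with hU
  have hU1 : U * star U = 1 := (Matrix.mem_unitaryGroup_iff).mp hA.eigenvectorUnitary.2
  have hU2 : star U * U = 1 := (Matrix.mem_unitaryGroup_iff').mp hA.eigenvectorUnitary.2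
  set M : Matrix n n ℂ := star N * U with hM
  have hM1 : M * star M = 1 := by
    rw [hM, StarMul.star_mul, star_star, mul_assoc, ← mul_assoc U, hU1, one_mul, hN2]
  have hM2 : star M * M = 1 := by
    rw [hM, StarMul.star_mul, star_star, mul_assoc, ← mul_assoc N, hN1, one_mul, hU2]
  refine ⟨fun i j => Complex.normSq (M i j), fun i j => Complex.normSq_nonneg _,
    fun i => row_normSq_sum hM1 i, fun j => col_normSq_sum hM2 j, fun i => ?_⟩
  have hdecomp : star N * A * N = M * Matrix.diagonal (RCLike.ofReal ∘ hA.eigenvalues) * star M := by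
    conv_lhs => rw [hA.spectral_theorem, Unitary.conjStarAlgAut_apply]
    rw [hM, StarMul.star_mul, star_star, ← hU]
    simp only [Matrix.mul_assoc]
  rw [hdecomp, conj_diag_apply]
  rw [Complex.re_sum]
  congr 1 with j
  simp only [Function.comp_apply, rcOfReal]
  rw [← Complex.ofReal_mul, Complex.ofReal_re]

lemma trace_conj_diag {U : Matrix n n ℂ} (hU2 : star U * U = 1) (g : n → ℂ) :
    (U * Matrix.diagonal g * star U).trace = ∑ j, g j := by
  rw [Matrix.trace_mul_cycle, hU2, Matrix.one_mul, Matrix.trace_diagonal]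

lemma trace_eq_sum_eigenvalues {A : Matrix n n ℂ} (hA : A.IsHermitian) :
    A.trace = ((∑ i, hA.eigenvalues i : ℝ) : ℂ) := by
  have hU2 : star (hA.eigenvectorUnitary : Matrix n n ℂ) * (hA.eigenvectorUnitary : Matrix n n ℂ) = 1 :=
    (Matrix.mem_unitaryGroup_iff').mp hA.eigenvectorUnitary.2
  conv_lhs => rw [hA.spectral_theorem, Unitary.conjStarAlgAut_apply]
  rw [trace_conj_diag hU2]
  push_cast
  rfl

lemma conj_mul_conj {U : Matrix n n ℂ} (hU2 : star U * U = 1) (f g : n → ℂ) :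
    (U * Matrix.diagonal f * star U) * (U * Matrix.diagonal g * star U)
      = U * Matrix.diagonal (fun i => f i * g i) * star U := by
  rw [← Matrix.diagonal_mul_diagonal]
  calc (U * Matrix.diagonal f * star U) * (U * Matrix.diagonal g * star U)
      = U * (Matrix.diagonal f * ((star U * U) * (Matrix.diagonal g * star U))) := by
        simp only [Matrix.mul_assoc]
    _ = U * (Matrix.diagonal f * (Matrix.diagonal g * star U)) := by
        rw [hU2, Matrix.one_mul]
    _ = U * (Matrix.diagonal f * Matrix.diagonal g) * star U := by
        simp only [Matrix.mul_assoc]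

lemma trace_mul_cfc {A : Matrix n n ℂ} (hA : A.IsHermitian) (f : ℝ → ℝ) :
    (A * hA.cfc f).trace = ((∑ i, hA.eigenvalues i * f (hA.eigenvalues i) : ℝ) : ℂ) := by
  set U : Matrix n n ℂ := (hA.eigenvectorUnitary : Matrix n n ℂ) with hU
  have hU2 : star U * U = 1 := (Matrix.mem_unitaryGroup_iff').mp hA.eigenvectorUnitary.2
  have hc : hA.cfc f = U * Matrix.diagonal (RCLike.ofReal ∘ f ∘ hA.eigenvalues) * star U := rfl
  have hAspec : A = U * Matrix.diagonal (RCLike.ofReal ∘ hA.eigenvalues) * star U :=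
    hA.spectral_theorem
  have key : A * hA.cfc f
      = U * Matrix.diagonal (fun i => ((hA.eigenvalues i * f (hA.eigenvalues i) : ℝ) : ℂ)) * star U := by
    rw [hc]
    conv_lhs => lhs; rw [hAspec]
    rw [conj_mul_conj hU2]
    have harg : (fun i => (RCLike.ofReal ∘ hA.eigenvalues) i * (RCLike.ofReal ∘ f ∘ hA.eigenvalues) i)
        = fun i => ((hA.eigenvalues i * f (hA.eigenvalues i) : ℝ) : ℂ) := by
      funext i
      simp only [Function.comp_apply, rcOfReal]
      push_cast
      ring
    rw [harg]
  rw [key, trace_conj_diag hU2]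
  push_cast
  rfl

lemma vnEntropy_eq_sum {A : Matrix n n ℂ} (hA : A.IsHermitian) :
    vnEntropy A = ∑ i, Real.negMulLog (hA.eigenvalues i) := by
  have hlog : matLog A = hA.cfc Real.log := by
    rw [matLog, matFun, dif_pos hA]
  rw [vnEntropy, hlog, trace_mul_cfc hA Real.log, Complex.ofReal_re, ← Finset.sum_neg_distrib]
  congr 1 with i
  simp [Real.negMulLog]

open scoped MatrixOrder in
lemma traceNorm_herm {A : Matrix n n ℂ} (hA : A.IsHermitian) :
    traceNorm A = ∑ i, |hA.eigenvalues i| := by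
  set U : Matrix n n ℂ := (hA.eigenvectorUnitary : Matrix n n ℂ) with hU
  have hU2 : star U * U = 1 := (Matrix.mem_unitaryGroup_iff').mp hA.eigenvectorUnitary.2
  have hB : (Aᴴ * A).PosSemidef := Matrix.posSemidef_conjTranspose_mul_self A
  set C : Matrix n n ℂ := hA.cfc (fun x => |x|) with hCdef
  have hc : C = U * Matrix.diagonal (RCLike.ofReal ∘ (fun x => |x|) ∘ hA.eigenvalues) * star U := rfl
  have hAspec : A = U * Matrix.diagonal (RCLike.ofReal ∘ hA.eigenvalues) * star U :=
    hA.spectral_theorem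
  have hCps : C.PosSemidef := by
    rw [hc, Matrix.star_eq_conjTranspose]
    apply Matrix.PosSemidef.mul_mul_conjTranspose_same
    refine Matrix.posSemidef_diagonal_iff.mpr fun i => ?_
    simp only [Function.comp_apply, rcOfReal]
    exact_mod_cast Complex.zero_le_real.mpr (abs_nonneg _)
  have hCsq : C ^ 2 = Aᴴ * A := by
    rw [pow_two, hc, show Aᴴ = A from hA]
    conv_rhs => rw [hAspec]
    rw [conj_mul_conj hU2, conj_mul_conj hU2]
    have harg : (fun i => (RCLike.ofReal ∘ (fun x => |x|) ∘ hA.eigenvalues) i *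
          (RCLike.ofReal ∘ (fun x => |x|) ∘ hA.eigenvalues) i : n → ℂ)
        = (fun i => (RCLike.ofReal ∘ hA.eigenvalues) i * (RCLike.ofReal ∘ hA.eigenvalues) i : n → ℂ) := by
      funext i
      simp only [Function.comp_apply, rcOfReal]
      rw [← Complex.ofReal_mul, ← Complex.ofReal_mul, abs_mul_abs_self]
    rw [harg]
  have hCsqrt : C = CFC.sqrt (Aᴴ * A) :=
    ((CFC.sqrt_eq_iff (Aᴴ * A) C hB.nonneg hCps.nonneg).mpr (by rw [← pow_two]; exact hCsq)).symm
  have h1 : (CFC.sqrt (Aᴴ * A)).trace = ((∑ i, Real.sqrt (hB.1.eigenvalues i) : ℝ) : ℂ) := by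
    rw [CFC.sqrt_eq_cfc, cfc_nnreal_eq_real _ (Aᴴ * A) hB.nonneg, hB.1.cfc_eq, Matrix.IsHermitian.cfc,
      Unitary.conjStarAlgAut_apply,
      trace_conj_diag ((Matrix.mem_unitaryGroup_iff').mp hB.1.eigenvectorUnitary.2)]
    push_cast
    refine Finset.sum_congr rfl fun i _ => ?_
    simp [Real.coe_sqrt, Real.coe_toNNReal', max_eq_left (hB.eigenvalues_nonneg i)]
  have h2 : C.trace = ((∑ i, |hA.eigenvalues i| : ℝ) : ℂ) := by
    rw [hc, trace_conj_diag hU2]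
    push_cast
    rfl
  have h3 : traceNorm A = ∑ i, Real.sqrt (hB.1.eigenvalues i) := rfl
  rw [h3]
  have := h1.symm.trans ((congrArg Matrix.trace hCsqrt).symm.trans h2)
  exact_mod_cast this

lemma eig_congr {A B : Matrix n n ℂ} (h : A = B) (hA : A.IsHermitian) (hB : B.IsHermitian) :
    hA.eigenvalues = hB.eigenvalues := by subst h; rfl

lemma traceNorm_sub_comm (ρ σ : Matrix n n ℂ) : traceNorm (ρ - σ) = traceNorm (σ - ρ) := by
  have h : (ρ - σ)ᴴ * (ρ - σ) = (σ - ρ)ᴴ * (σ - ρ) := by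
    rw [show σ - ρ = -(ρ - σ) from (neg_sub ρ σ).symm]
    simp only [Matrix.conjTranspose_neg, Matrix.neg_mul, Matrix.mul_neg, neg_neg]
  rw [traceNorm, traceNorm]
  exact Finset.sum_congr rfl fun i _ => by
    rw [eig_congr h (Matrix.isHermitian_conjTranspose_mul_self _) (Matrix.isHermitian_conjTranspose_mul_self _)]

lemma diag_abs_le_traceNorm {A : Matrix n n ℂ} (hA : A.IsHermitian) (N : Matrix n n ℂ)
    (hN1 : N * star N = 1) (hN2 : star N * N = 1) :
    ∑ i, |((star N * A * N) i i).re| ≤ traceNorm A := by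
  obtain ⟨w, hw0, hwrow, hwcol, hwe⟩ := exists_bistochastic hA N hN1 hN2
  rw [traceNorm_herm hA]
  calc ∑ i, |((star N * A * N) i i).re| = ∑ i, |∑ j, w i j * hA.eigenvalues j| := by
        exact Finset.sum_congr rfl fun i _ => by rw [hwe i]
    _ ≤ ∑ i, ∑ j, |w i j * hA.eigenvalues j| :=
        Finset.sum_le_sum fun i _ => Finset.abs_sum_le_sum_abs _ _
    _ = ∑ j, (∑ i, w i j) * |hA.eigenvalues j| := by
        rw [Finset.sum_comm]
        exact Finset.sum_congr rfl fun j _ => by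
          rw [Finset.sum_mul]
          exact Finset.sum_congr rfl fun i _ => by
            rw [abs_mul, abs_of_nonneg (hw0 i j)]
    _ = ∑ j, |hA.eigenvalues j| := by
        exact Finset.sum_congr rfl fun j _ => by rw [hwcol j, one_mul]

lemma density_eig_sum {ρ : Matrix n n ℂ} (h : IsDensity ρ) :
    ∑ i, h.1.1.eigenvalues i = 1 := by
  have h1 := trace_eq_sum_eigenvalues h.1.1
  have h2 := h.2
  rw [h1] at h2
  exact_mod_cast h2

lemma density_eig_nonneg {ρ : Matrix n n ℂ} (h : IsDensity ρ) (i : n) :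
    0 ≤ h.1.1.eigenvalues i := h.1.eigenvalues_nonneg i

lemma density_eig_le_one {ρ : Matrix n n ℂ} (h : IsDensity ρ) (i : n) :
    h.1.1.eigenvalues i ≤ 1 := by
  have := Finset.single_le_sum (fun j _ => density_eig_nonneg h j) (Finset.mem_univ i)
  rw [density_eig_sum h] at this
  exact this

lemma posSemidef_ofReal_smul {c : ℝ} (hc : 0 ≤ c) {A : Matrix n n ℂ} (hA : A.PosSemidef) :
    ((c : ℂ) • A).PosSemidef := by
  exact hA.smul (Complex.zero_le_real.mpr hc)

/-- One-sided Fannes-type inequality. -/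
lemma oneSided [Nonempty n] {ρ σ : Matrix n n ℂ} (hρ : IsDensity ρ) (hσ : IsDensity σ)
    {δ : ℝ} (hδ0 : 0 < δ) (hδ1 : δ ≤ Real.exp (-1))
    (hb : ∀ N : Matrix n n ℂ, N * star N = 1 → star N * N = 1 →
      ∑ i, |((star N * (σ - ρ) * N) i i).re| ≤ δ) :
    vnEntropy σ - vnEntropy ρ ≤ δ * Real.log ((Fintype.card n : ℝ) / δ) := by
  set U : Matrix n n ℂ := (hρ.1.1.eigenvectorUnitary : Matrix n n ℂ) with hU
  have hU1 : U * star U = 1 := (Matrix.mem_unitaryGroup_iff).mp hρ.1.1.eigenvectorUnitary.2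
  have hU2 : star U * U = 1 := (Matrix.mem_unitaryGroup_iff').mp hρ.1.1.eigenvectorUnitary.2
  set p : n → ℝ := hρ.1.1.eigenvalues with hp
  have hp0 : ∀ i, 0 ≤ p i := density_eig_nonneg hρ
  have hp1 : ∀ i, p i ≤ 1 := density_eig_le_one hρ
  obtain ⟨w, hw0, hwrow, hwcol, hwe⟩ := exists_bistochastic hσ.1.1 U hU1 hU2
  set μ : n → ℝ := hσ.1.1.eigenvalues with hμ
  have hμ0 : ∀ i, 0 ≤ μ i := density_eig_nonneg hσ
  have hμsum : ∑ j, μ j = 1 := density_eig_sum hσ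
  set q : n → ℝ := fun i => ∑ j, w i j * μ j with hq
  have hqre : ∀ i, ((star U * σ * U) i i).re = q i := fun i => by
    simp only [hq]; exact hwe i
  have hq0 : ∀ i, 0 ≤ q i := fun i => by
    simp only [hq]
    exact Finset.sum_nonneg fun j _ => mul_nonneg (hw0 i j) (hμ0 j)
  have hq1 : ∀ i, q i ≤ 1 := fun i => by
    simp only [hq]
    calc ∑ j, w i j * μ j ≤ ∑ j, μ j := Finset.sum_le_sum fun j _ => by
          have hwle : w i j ≤ 1 := by
            have := Finset.single_le_sum (fun k _ => hw0 i k) (Finset.mem_univ j)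
            rw [hwrow i] at this; exact this
          exact mul_le_of_le_one_left (hμ0 j) hwle
      _ = 1 := hμsum
  have hHσ : vnEntropy σ ≤ ∑ i, Real.negMulLog (q i) := by
    rw [vnEntropy_eq_sum hσ.1.1, ← hμ]
    calc ∑ j, Real.negMulLog (μ j) = ∑ j, (∑ i, w i j) * Real.negMulLog (μ j) := by
          exact Finset.sum_congr rfl fun j _ => by rw [hwcol j, one_mul]
      _ = ∑ i, ∑ j, w i j * Real.negMulLog (μ j) := by
          rw [Finset.sum_comm]
          exact Finset.sum_congr rfl fun j _ => Finset.sum_mul _ _ _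
      _ ≤ ∑ i, Real.negMulLog (q i) := Finset.sum_le_sum fun i _ => by
          simp only [hq]
          have hjen := Real.concaveOn_negMulLog.le_map_sum
            (t := Finset.univ) (w := w i) (p := μ)
            (fun j _ => hw0 i j) (hwrow i) (fun j _ => Set.mem_Ici.mpr (hμ0 j))
          simpa only [smul_eq_mul] using hjen
  have hdiagρ : star U * ρ * U = Matrix.diagonal (RCLike.ofReal ∘ p) := by
    conv_lhs => rw [hρ.1.1.spectral_theorem, Unitary.conjStarAlgAut_apply]
    rw [← hU]
    simp only [Matrix.mul_assoc]
    rw [hU2, Matrix.mul_one, ← Matrix.mul_assoc, hU2, Matrix.one_mul]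
  have hpdiag : ∀ i, ((star U * ρ * U) i i).re = p i := fun i => by
    rw [hdiagρ, Matrix.diagonal_apply_eq]
    simp [rcOfReal]
  set ε : n → ℝ := fun i => |p i - q i| with hε
  have hεe : ∀ i, ε i = |((star U * (σ - ρ) * U) i i).re| := fun i => by
    have hsub : star U * (σ - ρ) * U = star U * σ * U - star U * ρ * U := by
      rw [Matrix.mul_sub, Matrix.sub_mul]
    simp only [hε, hsub, Matrix.sub_apply, Complex.sub_re]
    rw [hqre i, hpdiag i, abs_sub_comm]
  have hε0 : ∀ i, 0 ≤ ε i := fun i => abs_nonneg _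
  have hεsum : ∑ i, ε i ≤ δ := by
    rw [Finset.sum_congr rfl fun i _ => hεe i]
    exact hb U hU1 hU2
  have hεb : ∀ i, ε i ≤ Real.exp (-1) := fun i => by
    have h1 : ε i ≤ ∑ j, ε j := Finset.single_le_sum (fun j _ => hε0 j) (Finset.mem_univ i)
    linarith
  have hkey : ∑ i, Real.negMulLog (q i) - ∑ i, Real.negMulLog (p i)
      ≤ ∑ i, Real.negMulLog (ε i) := by
    rw [← Finset.sum_sub_distrib]
    exact Finset.sum_le_sum fun i _ =>
      nml_pointwise (hp0 i) (hp1 i) (hq0 i) (hq1 i) (hεb i)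
  have hfin : ∑ i, Real.negMulLog (ε i) ≤ δ * Real.log ((Fintype.card n : ℝ) / δ) :=
    sum_nml_le ε hε0 hεsum hδ0 hδ1
  have hHρ : vnEntropy ρ = ∑ i, Real.negMulLog (p i) := vnEntropy_eq_sum hρ.1.1
  linarith


end AuxQuantum

/-- Holevo information of an ensemble `{P(x), ρ_x}`. -/
noncomputable def holevoInfo {d : ℕ} {X : Type*} [Fintype X] (P : X → ℝ)
    (ρ : X → Matrix (Fin d) (Fin d) ℂ) : ℝ :=
  vnEntropy (∑ x, (P x : ℂ) • ρ x) - ∑ x, P x * vnEntropy (ρ x)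

set_option maxHeartbeats 1000000 in
/-- continuity of the Holevo information under trace-norm perturbation
of the states of the ensemble. -/
theorem stmt15 {d : ℕ} (X : Type*) [Fintype X]
    (P : X → ℝ) (hP0 : ∀ x, 0 ≤ P x) (hP1 : ∑ x, P x = 1)
    (ρ σ : X → Matrix (Fin d) (Fin d) ℂ)
    (hρ : ∀ x, IsDensity (ρ x)) (hσ : ∀ x, IsDensity (σ x))
    (δ : ℝ) (hδ0 : 0 < δ) (hδ1 : δ ≤ Real.exp (-1))
    (hclose : ∀ x, traceNorm (ρ x - σ x) ≤ δ) :
    holevoInfo P σ ≥ holevoInfo P ρ - 2 * δ * Real.log ((d : ℝ) / δ) := by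
  classical
  -- X is nonempty
  have hXne : Nonempty X := by
    by_contra h
    rw [not_nonempty_iff] at h
    rw [Finset.univ_eq_empty, Finset.sum_empty] at hP1
    norm_num at hP1
  obtain ⟨x₀⟩ := hXne
  -- d is positive
  have hd0 : 0 < d := by
    rcases Nat.eq_zero_or_pos d with h | h
    · exfalso
      have htr := (hρ x₀).2
      subst h
      rw [Matrix.trace] at htr
      rw [Finset.univ_eq_empty, Finset.sum_empty] at htr
      norm_num at htr
    · exact h
  haveI : Nonempty (Fin d) := ⟨⟨0, hd0⟩⟩
  set L : ℝ := Real.log ((d : ℝ) / δ) with hL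
  have hcard : ((Fintype.card (Fin d) : ℝ)) = (d : ℝ) := by simp
  -- averaged states
  set ρbar : Matrix (Fin d) (Fin d) ℂ := ∑ x, (P x : ℂ) • ρ x with hρb
  set σbar : Matrix (Fin d) (Fin d) ℂ := ∑ x, (P x : ℂ) • σ x with hσb
  have hdens : ∀ (τ : X → Matrix (Fin d) (Fin d) ℂ), (∀ x, IsDensity (τ x)) →
      IsDensity (∑ x, (P x : ℂ) • τ x) := by
    intro τ hτ
    constructor
    · apply Finset.sum_induction _ Matrix.PosSemidef
        (fun a b ha hb => ha.add hb) Matrix.PosSemidef.zero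
      intro x _
      exact posSemidef_ofReal_smul (hP0 x) (hτ x).1
    · rw [Matrix.trace_sum]
      have : ∀ x ∈ Finset.univ, ((P x : ℂ) • τ x).trace = (P x : ℂ) := by
        intro x _
        rw [Matrix.trace_smul, (hτ x).2, smul_eq_mul, mul_one]
      rw [Finset.sum_congr rfl this]
      push_cast
      exact_mod_cast congrArg (Complex.ofReal) hP1
  have hρbar : IsDensity ρbar := hdens ρ hρ
  have hσbar : IsDensity σbar := hdens σ hσ
  -- diagonal bound for individual pairs
  have hind : ∀ x, ∀ N : Matrix (Fin d) (Fin d) ℂ, N * star N = 1 → star N * N = 1 →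
      ∑ i, |((star N * (σ x - ρ x) * N) i i).re| ≤ δ := by
    intro x N hN1 hN2
    calc ∑ i, |((star N * (σ x - ρ x) * N) i i).re|
        ≤ traceNorm (σ x - ρ x) :=
          diag_abs_le_traceNorm ((hσ x).1.1.sub (hρ x).1.1) N hN1 hN2
      _ = traceNorm (ρ x - σ x) := traceNorm_sub_comm _ _
      _ ≤ δ := hclose x
  have hind' : ∀ x, ∀ N : Matrix (Fin d) (Fin d) ℂ, N * star N = 1 → star N * N = 1 →
      ∑ i, |((star N * (ρ x - σ x) * N) i i).re| ≤ δ := by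
    intro x N hN1 hN2
    calc ∑ i, |((star N * (ρ x - σ x) * N) i i).re|
        ≤ traceNorm (ρ x - σ x) :=
          diag_abs_le_traceNorm ((hρ x).1.1.sub (hσ x).1.1) N hN1 hN2
      _ ≤ δ := hclose x
  -- entropies of individuals
  have hone : ∀ x, vnEntropy (σ x) - vnEntropy (ρ x) ≤ δ * L := by
    intro x
    have := oneSided (hρ x) (hσ x) hδ0 hδ1 (hind x)
    rwa [hcard] at this
  -- averaged difference diagonal bound
  have hbavg : ∀ N : Matrix (Fin d) (Fin d) ℂ, N * star N = 1 → star N * N = 1 →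
      ∑ i, |((star N * (ρbar - σbar) * N) i i).re| ≤ δ := by
    intro N hN1 hN2
    have hsplit : star N * (ρbar - σbar) * N
        = ∑ x, (P x : ℂ) • (star N * (ρ x - σ x) * N) := by
      rw [hρb, hσb, ← Finset.sum_sub_distrib]
      rw [Matrix.mul_sum, Matrix.sum_mul]
      refine Finset.sum_congr rfl fun x _ => ?_
      rw [← smul_sub, Matrix.mul_smul, Matrix.smul_mul]
    calc ∑ i, |((star N * (ρbar - σbar) * N) i i).re|
        = ∑ i, |∑ x, P x * ((star N * (ρ x - σ x) * N) i i).re| := by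
          refine Finset.sum_congr rfl fun i _ => ?_
          rw [hsplit]
          congr 1
          rw [Matrix.sum_apply, Complex.re_sum]
          refine Finset.sum_congr rfl fun x _ => ?_
          rw [Matrix.smul_apply, smul_eq_mul, Complex.re_ofReal_mul]
      _ ≤ ∑ i, ∑ x, P x * |((star N * (ρ x - σ x) * N) i i).re| := by
          refine Finset.sum_le_sum fun i _ => ?_
          calc |∑ x, P x * ((star N * (ρ x - σ x) * N) i i).re|
              ≤ ∑ x, |P x * ((star N * (ρ x - σ x) * N) i i).re| :=
                Finset.abs_sum_le_sum_abs _ _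
            _ = ∑ x, P x * |((star N * (ρ x - σ x) * N) i i).re| := by
                refine Finset.sum_congr rfl fun x _ => ?_
                rw [abs_mul, abs_of_nonneg (hP0 x)]
      _ = ∑ x, P x * ∑ i, |((star N * (ρ x - σ x) * N) i i).re| := by
          rw [Finset.sum_comm]
          exact Finset.sum_congr rfl fun x _ => (Finset.mul_sum _ _ _).symm
      _ ≤ ∑ x, P x * δ := Finset.sum_le_sum fun x _ =>
          mul_le_mul_of_nonneg_left (hind' x N hN1 hN2) (hP0 x)
      _ = δ := by rw [← Finset.sum_mul, hP1, one_mul]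
  have htwo : vnEntropy ρbar - vnEntropy σbar ≤ δ * L := by
    have := oneSided hσbar hρbar hδ0 hδ1 hbavg
    rwa [hcard] at this
  -- classical side sum
  have hsum : ∑ x, P x * vnEntropy (σ x) - ∑ x, P x * vnEntropy (ρ x) ≤ δ * L := by
    rw [← Finset.sum_sub_distrib]
    calc ∑ x, (P x * vnEntropy (σ x) - P x * vnEntropy (ρ x))
        = ∑ x, P x * (vnEntropy (σ x) - vnEntropy (ρ x)) := by
          refine Finset.sum_congr rfl fun x _ => ?_; ring
      _ ≤ ∑ x, P x * (δ * L) := Finset.sum_le_sum fun x _ =>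
          mul_le_mul_of_nonneg_left (hone x) (hP0 x)
      _ = δ * L := by rw [← Finset.sum_mul, hP1, one_mul]
  rw [ge_iff_le, holevoInfo, holevoInfo, ← hρb, ← hσb]
  linarith
end
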